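/- arXiv:1604.00713 — 5 statements merged into one kernel-verified Lean document; each statement's English description precedes it below -/
import Mathlib

section
/- Let (α, μ) be a σ-finite measure space and τ : α → α a measure-preserving map. Let f : α → ℝ be measurable and suppose that for every λ > 0 the truncated function f·1_{{|f|>λ}} is integrable (i.e. f belongs to the space R₀ = (L₁+L∞)₀). Then for μ-almost every x ∈ α, the Birkhoff averages (1/n)·∑_{k=0}^{n-1} f(τ^k x) converge to a finite limit as n → ∞. -/
open MeasureTheory Filter Finset Topology
set_option linter.unusedSectionVars false

namespace BirkhoffR0Aux

variable {α : Type*} [MeasurableSpace α] {μ : Measure α} {τ : α → α}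

/-- Birkhoff sums. -/
noncomputable def S (τ : α → α) (g : α → ℝ) (n : ℕ) (x : α) : ℝ :=
  ∑ k ∈ Finset.range n, g (τ^[k] x)

/-- Birkhoff averages. -/
noncomputable def A (τ : α → α) (g : α → ℝ) (n : ℕ) (x : α) : ℝ :=
  (n : ℝ)⁻¹ * S τ g n x

/-- `limsup` of the Birkhoff averages, in `EReal`. -/
noncomputable def Φ (τ : α → α) (g : α → ℝ) (x : α) : EReal :=
  limsup (fun n => ((A τ g n x : ℝ) : EReal)) atTop

lemma S_zero (g : α → ℝ) (x : α) : S τ g 0 x = 0 := by simp [S]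

lemma S_succ (g : α → ℝ) (n : ℕ) (x : α) :
    S τ g (n + 1) x = g x + S τ g n (τ x) := by
  simp only [S]
  rw [Finset.sum_range_succ']
  simp only [Function.iterate_succ_apply, Function.iterate_zero_apply]
  ring

lemma S_neg (g : α → ℝ) (n : ℕ) (x : α) :
    S τ (fun y => -g y) n x = -S τ g n x := by
  simp [S]

lemma A_neg (g : α → ℝ) (n : ℕ) (x : α) :
    A τ (fun y => -g y) n x = -A τ g n x := by
  simp [A, S_neg]

lemma measurable_S (hτm : Measurable τ) {g : α → ℝ} (hg : Measurable g) (n : ℕ) :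
    Measurable (S τ g n) := by
  apply Finset.measurable_sum
  intro k _
  exact hg.comp (hτm.iterate k)

lemma measurable_A (hτm : Measurable τ) {g : α → ℝ} (hg : Measurable g) (n : ℕ) :
    Measurable (A τ g n) :=
  (measurable_S hτm hg n).const_mul _

lemma measurable_Φ (hτm : Measurable τ) {g : α → ℝ} (hg : Measurable g) :
    Measurable (Φ τ g) := by
  apply Measurable.limsup
  intro n
  exact measurable_coe_real_ereal.comp (measurable_A hτm hg n)

lemma integrable_S (hτ : MeasurePreserving τ μ μ) {g : α → ℝ} (hg : Measurable g)
    (hgi : Integrable g μ) (n : ℕ) : Integrable (S τ g n) μ := by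
  apply integrable_finset_sum
  intro k _
  exact ((hτ.iterate k).integrable_comp hg.aestronglyMeasurable).mpr hgi

/-- Running maxima of the Birkhoff sums (including the trivial sum `S 0 = 0`). -/
noncomputable def M (τ : α → α) (g : α → ℝ) : ℕ → α → ℝ
  | 0 => fun _ => 0
  | (N + 1) => fun x => max (M τ g N x) (S τ g (N + 1) x)

lemma M_nonneg (g : α → ℝ) (N : ℕ) (x : α) : 0 ≤ M τ g N x := by
  induction N with
  | zero => simp [M]
  | succ N ih => exact le_trans ih (le_max_left _ _)

lemma M_mono (g : α → ℝ) {N N' : ℕ} (h : N ≤ N') (x : α) : M τ g N x ≤ M τ g N' x := by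
  induction N' with
  | zero => simp_all
  | succ N' ih =>
    rcases Nat.lt_or_ge N (N' + 1) with h' | h'
    · exact le_trans (ih (Nat.lt_succ_iff.mp h')) (le_max_left _ _)
    · have : N = N' + 1 := le_antisymm h h'
      subst this; rfl

lemma S_le_M (g : α → ℝ) {n N : ℕ} (h : n ≤ N) (x : α) : S τ g n x ≤ M τ g N x := by
  rcases Nat.eq_zero_or_pos n with rfl | hn
  · rw [S_zero]; exact M_nonneg g N x
  · obtain ⟨m, rfl⟩ := Nat.exists_eq_add_of_lt hn
    have : S τ g (m + 1) x ≤ M τ g (m + 1) x := le_max_right _ _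
    calc S τ g (0 + m + 1) x = S τ g (m + 1) x := by ring_nf
    _ ≤ M τ g (m + 1) x := this
    _ ≤ M τ g N x := M_mono g (by omega) x

lemma measurable_M (hτm : Measurable τ) {g : α → ℝ} (hg : Measurable g) (N : ℕ) :
    Measurable (M τ g N) := by
  induction N with
  | zero => exact measurable_const
  | succ N ih => exact ih.max (measurable_S hτm hg (N + 1))

lemma integrable_M (hτ : MeasurePreserving τ μ μ) {g : α → ℝ} (hg : Measurable g)
    (hgi : Integrable g μ) (N : ℕ) : Integrable (M τ g N) μ := by
  induction N with
  | zero => exact integrable_zero _ _ _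
  | succ N ih => exact ih.sup (integrable_S hτ hg hgi (N + 1))

lemma M_key (g : α → ℝ) (N : ℕ) (x : α) (h : 0 < M τ g N x) :
    M τ g N x ≤ g x + M τ g N (τ x) := by
  induction N with
  | zero => simp [M] at h
  | succ N ih =>
    show max (M τ g N x) (S τ g (N + 1) x) ≤ _
    rcases le_total (S τ g (N + 1) x) (M τ g N x) with h' | h'
    · rw [max_eq_left h']
      rw [show M τ g (N+1) x = max (M τ g N x) (S τ g (N + 1) x) from rfl,
        max_eq_left h'] at h
      exact le_trans (ih h) (by gcongr; exact M_mono g (Nat.le_succ N) (τ x))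
    · rw [max_eq_right h']
      rw [S_succ]
      gcongr
      exact S_le_M g (Nat.le_succ N) (τ x)

lemma M_pos_iff (g : α → ℝ) (N : ℕ) (x : α) :
    0 < M τ g N x ↔ ∃ n, 0 < n ∧ n ≤ N ∧ 0 < S τ g n x := by
  constructor
  · intro h
    induction N with
    | zero => simp [M] at h
    | succ N ih =>
      rcases lt_max_iff.mp h with h' | h'
      · obtain ⟨n, hn1, hn2, hn3⟩ := ih h'
        exact ⟨n, hn1, Nat.le_succ_of_le hn2, hn3⟩
      · exact ⟨N + 1, Nat.succ_pos N, le_refl _, h'⟩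
  · rintro ⟨n, _, hn2, hn3⟩
    exact lt_of_lt_of_le hn3 (S_le_M g hn2 x)

/-- Garsia's maximal ergodic lemma: the integral of `g` over the set where some Birkhoff
sum is positive (up to time `N`) is nonnegative. -/
lemma garsia (hτ : MeasurePreserving τ μ μ) {g : α → ℝ} (hg : Measurable g)
    (hgi : Integrable g μ) (N : ℕ) :
    0 ≤ ∫ x, ({y | 0 < M τ g N y}).indicator g x ∂μ := by
  set Aset := {y | 0 < M τ g N y} with hAdef
  have hAm : MeasurableSet Aset := measurableSet_lt measurable_const (measurable_M hτ.measurable hg N)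
  have hMi : Integrable (M τ g N) μ := integrable_M hτ hg hgi N
  have hMm : Measurable (M τ g N) := measurable_M hτ.measurable hg N
  have hMτi : Integrable (fun x => M τ g N (τ x)) μ :=
    (hτ.integrable_comp hMm.aestronglyMeasurable).mpr hMi
  have key : ∀ x, M τ g N x - M τ g N (τ x) ≤ Aset.indicator g x := by
    intro x
    by_cases hx : x ∈ Aset
    · rw [Set.indicator_of_mem hx]
      have := M_key g N x hx
      linarith
    · rw [Set.indicator_of_notMem hx]
      have h0 : M τ g N x = 0 := le_antisymm (not_lt.1 hx) (M_nonneg g N x)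
      have h1 := M_nonneg (τ := τ) g N (τ x)
      linarith
  have h3 : ∫ x, (M τ g N x - M τ g N (τ x)) ∂μ = 0 := by
    rw [integral_sub hMi hMτi]
    have : ∫ y, M τ g N y ∂μ = ∫ x, M τ g N (τ x) ∂μ := by
      conv_lhs => rw [← hτ.map_eq]
      exact integral_map hτ.measurable.aemeasurable hMm.aestronglyMeasurable
    rw [← this, sub_self]
  calc (0:ℝ) = ∫ x, (M τ g N x - M τ g N (τ x)) ∂μ := h3.symm
    _ ≤ ∫ x, Aset.indicator g x ∂μ :=
      integral_mono (hMi.sub hMτi) (hgi.indicator hAm) key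

lemma iterate_mem_iff {E : Set α} (hinv : ∀ x, τ x ∈ E ↔ x ∈ E) (k : ℕ) (x : α) :
    τ^[k] x ∈ E ↔ x ∈ E := by
  induction k with
  | zero => rfl
  | succ k ih => rw [Function.iterate_succ_apply', hinv, ih]

/-- The key consequence of the maximal lemma, relativized to an invariant set `E` on which
some Birkhoff sum of `h` is positive at every point: `∫_E h ≥ 0`. -/
lemma lemA (hτ : MeasurePreserving τ μ μ) {h : α → ℝ} (hm : Measurable h)
    {E : Set α} (hEm : MeasurableSet E) (hinv : ∀ x, τ x ∈ E ↔ x ∈ E)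
    (hint : Integrable (E.indicator h) μ)
    (hE : ∀ x ∈ E, ∃ n, 0 < n ∧ 0 < S τ h n x) :
    0 ≤ ∫ x, E.indicator h x ∂μ := by
  set h' := E.indicator h with hh'
  have hm' : Measurable h' := hm.indicator hEm
  have hS'E : ∀ n x, x ∈ E → S τ h' n x = S τ h n x := by
    intro n x hx
    refine Finset.sum_congr rfl fun k _ => ?_
    rw [hh', Set.indicator_of_mem ((iterate_mem_iff hinv k x).mpr hx)]
  have hS'0 : ∀ n x, x ∉ E → S τ h' n x = 0 := by
    intro n x hx
    refine Finset.sum_eq_zero fun k _ => ?_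
    rw [hh', Set.indicator_of_notMem (fun hc => hx ((iterate_mem_iff hinv k x).mp hc))]
  have hAsub : ∀ N x, 0 < M τ h' N x → x ∈ E := by
    intro N x hx
    obtain ⟨n, _, _, hpos⟩ := (M_pos_iff h' N x).mp hx
    by_contra hxE
    rw [hS'0 n x hxE] at hpos
    exact lt_irrefl 0 hpos
  have hEA : ∀ x ∈ E, ∃ N, 0 < M τ h' N x := by
    intro x hx
    obtain ⟨n, hn0, hnpos⟩ := hE x hx
    refine ⟨n, (M_pos_iff h' n x).mpr ⟨n, hn0, le_refl _, ?_⟩⟩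
    rw [hS'E n x hx]; exact hnpos
  -- dominated convergence of `1_{A_N} h'` towards `h'`
  have hconv : Tendsto (fun N => ∫ x, ({y | 0 < M τ h' N y}).indicator h' x ∂μ) atTop
      (𝓝 (∫ x, h' x ∂μ)) := by
    apply tendsto_integral_of_dominated_convergence (fun x => |h' x|)
    · intro N
      exact (hm'.indicator
        (measurableSet_lt measurable_const (measurable_M hτ.measurable hm' N))).aestronglyMeasurable
    · exact hint.abs
    · intro N
      refine Eventually.of_forall fun x => ?_
      rw [show |h' x| = ‖h' x‖ from rfl]
      exact norm_indicator_le_norm_self _ _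
    · refine Eventually.of_forall fun x => ?_
      by_cases hx : x ∈ E
      · obtain ⟨N₀, hN₀⟩ := hEA x hx
        apply tendsto_const_nhds.congr'
        filter_upwards [eventually_ge_atTop N₀] with N hN
        rw [Set.indicator_of_mem]
        exact lt_of_lt_of_le hN₀ (M_mono h' hN x)
      · have : ∀ N, ({y | 0 < M τ h' N y}).indicator h' x = 0 := by
          intro N
          rw [Set.indicator_of_notMem]
          intro hc
          exact hx (hAsub N x hc)
        rw [show h' x = 0 from Set.indicator_of_notMem hx h]
        simpa [this] using tendsto_const_nhds
  refine ge_of_tendsto' hconv fun N => ?_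
  exact garsia hτ hm' hint N

lemma abs_indicator_le_one (C : Set α) (x : α) :
    |C.indicator (fun _ => (1:ℝ)) x| ≤ 1 := by
  by_cases hx : x ∈ C <;> simp [Set.indicator_of_mem, Set.indicator_of_notMem, hx]

/-- Lower bound half of the key estimate: if on an invariant set `E` some Birkhoff average
exceeds `b ≥ 0` at every point, then `b · μ(C) ≤ ∫_E g` for every finite-measure `C ⊆ E`. -/
lemma lemB (hτ : MeasurePreserving τ μ μ) {g : α → ℝ} (hg : Measurable g)
    (hgi : Integrable g μ) {E : Set α} (hEm : MeasurableSet E)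
    (hinv : ∀ x, τ x ∈ E ↔ x ∈ E) {b : ℝ} (hb : 0 ≤ b)
    (hE : ∀ x ∈ E, ∃ n : ℕ, 0 < n ∧ (n : ℝ) * b < S τ g n x)
    {C : Set α} (hCm : MeasurableSet C) (hCE : C ⊆ E) (hCfin : μ C ≠ ⊤) :
    b * (μ C).toReal ≤ ∫ x in E, g x ∂μ := by
  set h : α → ℝ := fun y => g y - C.indicator (fun _ => b) y with hhdef
  have hCi : Integrable (C.indicator (fun _ => b)) μ :=
    (integrable_indicator_iff hCm).2 (integrableOn_const hCfin)
  have hm : Measurable h := hg.sub (measurable_const.indicator hCm)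
  have hEind : E.indicator h = fun x => E.indicator g x - C.indicator (fun _ => b) x := by
    funext x
    by_cases hx : x ∈ E
    · rw [Set.indicator_of_mem hx, Set.indicator_of_mem hx]
    · rw [Set.indicator_of_notMem hx, Set.indicator_of_notMem hx,
        Set.indicator_of_notMem (fun hc => hx (hCE hc)), sub_zero]
  have hint : Integrable (E.indicator h) μ := by
    rw [hEind]; exact (hgi.indicator hEm).sub hCi
  have hwit : ∀ x ∈ E, ∃ n, 0 < n ∧ 0 < S τ h n x := by
    intro x hx
    obtain ⟨n, hn0, hlt⟩ := hE x hx
    refine ⟨n, hn0, ?_⟩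
    have hSsplit : S τ h n x = S τ g n x - ∑ k ∈ Finset.range n, C.indicator (fun _ => b) (τ^[k] x) := by
      simp [S, hhdef, Finset.sum_sub_distrib]
    have hsum_le : ∑ k ∈ Finset.range n, C.indicator (fun _ => b) (τ^[k] x) ≤ (n : ℝ) * b := by
      calc ∑ k ∈ Finset.range n, C.indicator (fun _ => b) (τ^[k] x)
          ≤ ∑ _k ∈ Finset.range n, b := by
            apply Finset.sum_le_sum
            intro k _
            by_cases hc : τ^[k] x ∈ C
            · rw [Set.indicator_of_mem hc]
            · rw [Set.indicator_of_notMem hc]; exact hb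
        _ = (n : ℝ) * b := by simp [mul_comm]
    rw [hSsplit]
    linarith
  have h0 := lemA hτ hm hEm hinv hint hwit
  rw [hEind] at h0
  rw [integral_sub (hgi.indicator hEm) hCi] at h0
  rw [integral_indicator hEm] at h0
  rw [integral_indicator_const b hCm] at h0
  simp only [smul_eq_mul, measureReal_def] at h0
  linarith

/-- Helper for comparing `EReal` limsups of real sequences. -/
lemma limsup_le_aux {u w : ℕ → ℝ}
    (H : ∀ c ε : ℝ, 0 < ε → (∀ᶠ n in atTop, w n < c) → ∀ᶠ n in atTop, u n < c + ε) :
    limsup (fun n => ((u n : ℝ) : EReal)) atTop ≤ limsup (fun n => ((w n : ℝ) : EReal)) atTop := by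
  by_contra hlt
  push_neg at hlt
  obtain ⟨c, hc1, hc2⟩ := EReal.exists_between_coe_real hlt
  have hev : ∀ᶠ n in atTop, w n < c := by
    have h := eventually_lt_of_limsup_lt hc1
    exact h.mono fun n hn => by exact_mod_cast hn
  have hle : ∀ ε : ℝ, 0 < ε →
      limsup (fun n => ((u n : ℝ) : EReal)) atTop ≤ ((c + ε : ℝ) : EReal) := by
    intro ε hε
    apply limsup_le_of_le (by isBoundedDefault)
    exact (H c ε hε hev).mono fun n hn => le_of_lt (by exact_mod_cast hn)
  have hfin : limsup (fun n => ((u n : ℝ) : EReal)) atTop ≤ (c : EReal) := by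
    by_contra h2
    push_neg at h2
    obtain ⟨d, hd1, hd2⟩ := EReal.exists_between_coe_real h2
    have hcd : c < d := by exact_mod_cast hd1
    have := hle (d - c) (by linarith)
    rw [show c + (d - c) = d by ring] at this
    exact absurd (lt_of_lt_of_le hd2 this) (lt_irrefl _)
  exact absurd (lt_of_lt_of_le hc2 hfin) (lt_irrefl _)

/-- The limsup of Birkhoff averages is invariant under `τ`. -/
lemma Φ_comp (g : α → ℝ) (x : α) : Φ τ g (τ x) = Φ τ g x := by
  have hshift : Φ τ g x = limsup (fun n => ((A τ g (n + 1) x : ℝ) : EReal)) atTop :=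
    (Filter.limsup_nat_add (fun n => ((A τ g n x : ℝ) : EReal)) 1).symm
  have hd1 : limsup (fun n => ((A τ g n (τ x) : ℝ) : EReal)) atTop ≤
      limsup (fun n => ((A τ g (n + 1) x : ℝ) : EReal)) atTop := by
    apply limsup_le_aux
    intro c ε hε hev
    have h2 : ∀ᶠ n : ℕ in atTop, (|c| + |g x|) / ε < (n : ℝ) :=
      (tendsto_natCast_atTop_atTop (R := ℝ)).eventually_gt_atTop _
    filter_upwards [hev, h2, eventually_ge_atTop 1] with n hw hn2 hn1
    have hn0 : (0 : ℝ) < n := by exact_mod_cast hn1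
    have hSrel : S τ g n (τ x) = ((n : ℝ) + 1) * A τ g (n + 1) x - g x := by
      have : ((n : ℝ) + 1) * A τ g (n + 1) x = S τ g (n + 1) x := by
        rw [A]
        push_cast
        field_simp
      rw [this, S_succ]
      ring
    have hub : S τ g n (τ x) < ((n : ℝ) + 1) * c - g x := by
      rw [hSrel]
      have : ((n : ℝ) + 1) * A τ g (n + 1) x < ((n : ℝ) + 1) * c := by
        apply mul_lt_mul_of_pos_left hw
        positivity
      linarith
    have : A τ g n (τ x) < (n : ℝ)⁻¹ * (((n : ℝ) + 1) * c - g x) := by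
      rw [A]
      exact mul_lt_mul_of_pos_left hub (by positivity)
    refine lt_of_lt_of_le this ?_
    rw [inv_mul_le_iff₀ hn0]
    have h3 : |c| + |g x| < (n : ℝ) * ε := by
      rw [div_lt_iff₀ hε] at hn2
      linarith
    have h4 : c ≤ |c| := le_abs_self c
    have h5 : -g x ≤ |g x| := neg_le_abs _
    nlinarith
  have hd2 : limsup (fun n => ((A τ g (n + 1) x : ℝ) : EReal)) atTop ≤
      limsup (fun n => ((A τ g n (τ x) : ℝ) : EReal)) atTop := by
    apply limsup_le_aux
    intro c ε hε hev
    have h2 : ∀ᶠ n : ℕ in atTop, (|c| + |g x|) / ε < (n : ℝ) :=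
      (tendsto_natCast_atTop_atTop (R := ℝ)).eventually_gt_atTop _
    filter_upwards [hev, h2, eventually_ge_atTop 1] with n hw hn2 hn1
    have hn0 : (0 : ℝ) < n := by exact_mod_cast hn1
    have hSrel : S τ g (n + 1) x = g x + (n : ℝ) * A τ g n (τ x) := by
      rw [S_succ]
      congr 1
      rw [A]
      field_simp
    have hub : S τ g (n + 1) x < g x + (n : ℝ) * c := by
      rw [hSrel]
      have := mul_lt_mul_of_pos_left hw hn0
      linarith
    have hA : A τ g (n + 1) x < ((n : ℝ) + 1)⁻¹ * (g x + (n : ℝ) * c) := by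
      rw [A]
      push_cast
      exact mul_lt_mul_of_pos_left hub (by positivity)
    refine lt_of_lt_of_le hA ?_
    rw [inv_mul_le_iff₀ (by positivity)]
    have h3 : |c| + |g x| < (n : ℝ) * ε := by
      rw [div_lt_iff₀ hε] at hn2
      linarith
    have h4 : c ≤ |c| := le_abs_self c
    have h5 : g x ≤ |g x| := le_abs_self _
    have h6 : -|c| ≤ c := neg_abs_le c
    nlinarith
  rw [Φ, hshift]
  exact le_antisymm hd1 hd2

/-- The sets where the averages oscillate between `a` and `b > a` (with `b > 0`) are null. -/
lemma lemC (hτ : MeasurePreserving τ μ μ) [SigmaFinite μ] {g : α → ℝ} (hg : Measurable g)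
    (hgi : Integrable g μ) {a b : ℝ} (hab : a < b) (hb : 0 < b) :
    μ {x | ((b : ℝ) : EReal) < Φ τ g x ∧ ((-a : ℝ) : EReal) < Φ τ (fun y => -g y) x} = 0 := by
  set E := {x | ((b : ℝ) : EReal) < Φ τ g x ∧ ((-a : ℝ) : EReal) < Φ τ (fun y => -g y) x} with hEdef
  have hEm : MeasurableSet E := by
    have m1 : MeasurableSet {x | ((b : ℝ) : EReal) < Φ τ g x} :=
      measurable_Φ hτ.measurable hg measurableSet_Ioi
    have m2 : MeasurableSet {x | ((-a : ℝ) : EReal) < Φ τ (fun y => -g y) x} :=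
      measurable_Φ hτ.measurable hg.neg measurableSet_Ioi
    exact m1.inter m2
  have hinv : ∀ x, τ x ∈ E ↔ x ∈ E := by
    intro x
    simp only [hEdef, Set.mem_setOf_eq, Φ_comp]
  -- witnesses for the lower bound
  have hwitb : ∀ x ∈ E, ∃ n : ℕ, 0 < n ∧ (n : ℝ) * b < S τ g n x := by
    intro x hx
    have hfreq : ∃ᶠ n in atTop, ((b : ℝ) : EReal) < ((A τ g n x : ℝ) : EReal) :=
      frequently_lt_of_lt_limsup (by isBoundedDefault) hx.1
    obtain ⟨n, hn1, hn⟩ := (Filter.frequently_atTop.mp hfreq) 1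
    have hbA : b < A τ g n x := by exact_mod_cast hn
    have hn0 : (0 : ℝ) < n := by exact_mod_cast hn1
    refine ⟨n, hn1, ?_⟩
    rw [A, inv_mul_eq_div, lt_div_iff₀ hn0] at hbA
    linarith
  -- lower bound on finite-measure subsets
  have key : ∀ C : Set α, MeasurableSet C → C ⊆ E → μ C ≠ ⊤ →
      b * (μ C).toReal ≤ ∫ x in E, g x ∂μ := by
    intro C hCm hCE hCfin
    exact lemB hτ hg hgi hEm hinv hb.le hwitb hCm hCE hCfin
  set I := ∫ x in E, g x ∂μ with hIdef
  -- exhaustion of E by finite-measure subsets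
  set C : ℕ → Set α := fun k => E ∩ spanningSets μ k with hCdef
  have hCm : ∀ k, MeasurableSet (C k) := fun k => hEm.inter (measurableSet_spanningSets μ k)
  have hCfin : ∀ k, μ (C k) ≠ ⊤ := fun k =>
    (lt_of_le_of_lt (measure_mono Set.inter_subset_right) (measure_spanningSets_lt_top μ k)).ne
  have hCmono : Monotone C := fun i j hij =>
    Set.inter_subset_inter_right E (monotone_spanningSets μ hij)
  have hCU : ⋃ k, C k = E := by
    rw [hCdef, ← Set.inter_iUnion, iUnion_spanningSets, Set.inter_univ]
  have htend : Tendsto (fun k => μ (C k)) atTop (𝓝 (μ E)) := by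
    have := tendsto_measure_iUnion_atTop (μ := μ) hCmono
    rwa [hCU] at this
  have hkey' : ∀ k, b * (μ (C k)).toReal ≤ I := fun k =>
    key (C k) (hCm k) Set.inter_subset_left (hCfin k)
  -- E has finite measure
  have hfin : μ E ≠ ⊤ := by
    intro hEtop
    rw [hEtop] at htend
    set r : ℝ := max (I / b) 0 + 1 with hrdef
    have hr0 : 0 ≤ r := by positivity
    have hev : ∀ᶠ k in atTop, ENNReal.ofReal r < μ (C k) :=
      htend.eventually (eventually_gt_nhds (ENNReal.ofReal_lt_top))
    obtain ⟨k, hk⟩ := hev.exists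
    have h1 : r < (μ (C k)).toReal := by
      have := ENNReal.toReal_lt_toReal (ENNReal.ofReal_ne_top) (hCfin k) |>.mpr hk
      rwa [ENNReal.toReal_ofReal hr0] at this
    have h2 : I / b < r := by
      rw [hrdef]
      have : I / b ≤ max (I / b) 0 := le_max_left _ _
      linarith
    have h3 : I < b * (μ (C k)).toReal := by
      rw [div_lt_iff₀ hb] at h2
      nlinarith
    exact absurd (hkey' k) (not_le.mpr h3)
  -- b * μ E ≤ I
  have hbE : b * (μ E).toReal ≤ I := by
    have htr : Tendsto (fun k => (μ (C k)).toReal) atTop (𝓝 (μ E).toReal) :=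
      (ENNReal.tendsto_toReal hfin).comp htend
    exact le_of_tendsto ((htr.const_mul b)) (Eventually.of_forall hkey')
  -- upper bound: I ≤ a * μ E, via `lemA` applied to `a - g`
  have haE : I ≤ a * (μ E).toReal := by
    have hconst : Integrable (E.indicator fun _ => a) μ :=
      (integrable_indicator_iff hEm).2 (integrableOn_const hfin)
    have hm : Measurable (fun z => a - g z) := measurable_const.sub hg
    have hEind : E.indicator (fun z => a - g z)
        = fun x => E.indicator (fun _ => a) x - E.indicator g x := by
      funext x
      by_cases hx : x ∈ E
      · simp [Set.indicator_of_mem hx]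
      · simp [Set.indicator_of_notMem hx]
    have hint : Integrable (E.indicator fun z => a - g z) μ := by
      rw [hEind]; exact hconst.sub (hgi.indicator hEm)
    have hwit : ∀ x ∈ E, ∃ n : ℕ, 0 < n ∧ 0 < S τ (fun z => a - g z) n x := by
      intro x hx
      have hfreq : ∃ᶠ n in atTop, ((-a : ℝ) : EReal) < ((A τ (fun y => -g y) n x : ℝ) : EReal) :=
        frequently_lt_of_lt_limsup (by isBoundedDefault) hx.2
      obtain ⟨n, hn1, hn⟩ := (Filter.frequently_atTop.mp hfreq) 1
      have hbA : -a < A τ (fun y => -g y) n x := by exact_mod_cast hn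
      rw [A_neg] at hbA
      have hn0 : (0 : ℝ) < n := by exact_mod_cast hn1
      have hAa : A τ g n x < a := by linarith
      rw [A, inv_mul_eq_div, div_lt_iff₀ hn0] at hAa
      refine ⟨n, hn1, ?_⟩
      have hsplit : S τ (fun z => a - g z) n x = (n : ℝ) * a - S τ g n x := by
        simp [S, Finset.sum_sub_distrib, mul_comm]
      rw [hsplit]
      linarith [hAa]
    have h0 := lemA hτ hm hEm hinv hint hwit
    rw [hEind] at h0
    rw [integral_sub hconst (hgi.indicator hEm)] at h0
    rw [integral_indicator hEm, integral_indicator hEm] at h0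
    have : ∫ _x in E, a ∂μ = (μ E).toReal * a := by
      rw [setIntegral_const, smul_eq_mul, measureReal_def]
    rw [this] at h0
    rw [hIdef]
    linarith
  -- combine
  have ht0 : 0 ≤ (μ E).toReal := ENNReal.toReal_nonneg
  have : (μ E).toReal = 0 := by nlinarith
  rcases (ENNReal.toReal_eq_zero_iff _).mp this with h | h
  · exact h
  · exact absurd h hfin

/-- The set where the averages tend to `-∞` is null. -/
lemma lemD (hτ : MeasurePreserving τ μ μ) [SigmaFinite μ] {g : α → ℝ} (hg : Measurable g)
    (hgi : Integrable g μ) :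
    μ {x | Φ τ g x = ⊥} = 0 := by
  set E := {x | Φ τ g x = ⊥} with hEdef
  have hEm : MeasurableSet E := (measurable_Φ hτ.measurable hg) (measurableSet_singleton ⊥)
  have hinv : ∀ x, τ x ∈ E ↔ x ∈ E := by
    intro x
    simp only [hEdef, Set.mem_setOf_eq, Φ_comp]
  have hwit : ∀ b : ℝ, 0 < b → ∀ x ∈ E, ∃ n : ℕ, 0 < n ∧ (n : ℝ) * b < S τ (fun y => -g y) n x := by
    intro b hb x hx
    have hlt : Φ τ g x < ((-b : ℝ) : EReal) := by
      rw [hx]; exact bot_lt_iff_ne_bot.mpr (by simp)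
    have hev : ∀ᶠ n in atTop, ((A τ g n x : ℝ) : EReal) < ((-b : ℝ) : EReal) :=
      eventually_lt_of_limsup_lt hlt
    obtain ⟨n, hn, hn1⟩ := ((hev.and (eventually_ge_atTop 1)).exists)
    have hA : A τ g n x < -b := by exact_mod_cast hn
    have hn0 : (0 : ℝ) < n := by exact_mod_cast hn1
    refine ⟨n, hn1, ?_⟩
    rw [S_neg]
    rw [A, inv_mul_eq_div, div_lt_iff₀ hn0] at hA
    nlinarith
  set I := ∫ x in E, -g x ∂μ with hIdef
  have key : ∀ b : ℝ, 0 < b → ∀ C : Set α, MeasurableSet C → C ⊆ E → μ C ≠ ⊤ →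
      b * (μ C).toReal ≤ I := by
    intro b hb C hCm hCE hCfin
    have := lemB hτ hg.neg hgi.neg hEm hinv hb.le (hwit b hb) hCm hCE hCfin
    simpa [hIdef] using this
  by_contra hne
  -- find a finite positive measure subset
  have : ∃ k, 0 < μ (E ∩ spanningSets μ k) := by
    by_contra hall
    push_neg at hall
    simp only [le_zero_iff] at hall
    apply hne
    have : E = ⋃ k, E ∩ spanningSets μ k := by
      rw [← Set.inter_iUnion, iUnion_spanningSets, Set.inter_univ]
    rw [this]
    exact measure_iUnion_null hall
  obtain ⟨k, hk⟩ := this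
  set C := E ∩ spanningSets μ k with hCdef
  have hCfin : μ C ≠ ⊤ :=
    (lt_of_le_of_lt (measure_mono Set.inter_subset_right) (measure_spanningSets_lt_top μ k)).ne
  have ht : 0 < (μ C).toReal := ENNReal.toReal_pos hk.ne' hCfin
  set t := (μ C).toReal with htdef
  set b := max (I / t) 0 + 1 with hbdef
  have hb : 0 < b := by positivity
  have hkey := key b hb C (hEm.inter (measurableSet_spanningSets μ k)) Set.inter_subset_left hCfin
  have h2 : I / t < b := by
    have : I / t ≤ max (I / t) 0 := le_max_left _ _
    rw [hbdef]; linarith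
  rw [div_lt_iff₀ ht] at h2
  rw [← htdef] at hkey
  nlinarith

/-- Birkhoff's pointwise ergodic theorem for integrable functions. -/
lemma birkhoff_L1 (hτ : MeasurePreserving τ μ μ) [SigmaFinite μ] {g : α → ℝ}
    (hg : Measurable g) (hgi : Integrable g μ) :
    ∀ᵐ x ∂μ, ∃ L : ℝ, Tendsto (fun n => A τ g n x) atTop (𝓝 L) := by
  -- the oscillation sets over rational pairs are null
  have hosc : ∀ q r : ℚ,
      μ {x | (((r : ℝ) : ℝ) : EReal) < Φ τ g x ∧ ((-(q : ℝ) : ℝ) : EReal) < Φ τ (fun y => -g y) x}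
        = 0 ∨ ¬ (q : ℝ) < (r : ℝ) := by
    intro q r
    by_cases hqr : (q : ℝ) < (r : ℝ)
    · left
      rcases lt_or_ge 0 ((r : ℝ)) with hr | hr
      · exact lemC hτ hg hgi hqr hr
      · -- apply lemC to -g with thresholds -r < -q, and -q > 0
        have hq0 : (0 : ℝ) < -(q : ℝ) := by linarith
        have h := lemC (g := fun y => -g y) hτ hg.neg hgi.neg (a := -(r : ℝ)) (b := -(q : ℝ)) (by linarith) hq0
        simp only [neg_neg] at h
        refine measure_mono_null ?_ h
        intro x hx
        exact ⟨hx.2, hx.1⟩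
    · right; exact hqr
  have h1 : ∀ᵐ x ∂μ, ∀ p : ℚ × ℚ,
      ¬(((((p.2 : ℝ)) : ℝ) : EReal) < Φ τ g x ∧ ((-(p.1 : ℝ) : ℝ) : EReal) < Φ τ (fun y => -g y) x
        ∧ (p.1 : ℝ) < (p.2 : ℝ)) := by
    rw [ae_all_iff]
    intro p
    rcases hosc p.1 p.2 with h | h
    · have : {x | ¬((((p.2 : ℝ) : ℝ) : EReal) < Φ τ g x ∧
          ((-(p.1 : ℝ) : ℝ) : EReal) < Φ τ (fun y => -g y) x ∧ (p.1 : ℝ) < (p.2 : ℝ))}ᶜ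
          ⊆ {x | (((p.2 : ℝ) : ℝ) : EReal) < Φ τ g x ∧
            ((-(p.1 : ℝ) : ℝ) : EReal) < Φ τ (fun y => -g y) x} := by
        intro x hx
        simp only [Set.mem_compl_iff, Set.mem_setOf_eq, not_not] at hx
        exact ⟨hx.1, hx.2.1⟩
      exact measure_mono_null (by simpa using this) h
    · filter_upwards with x hx
      exact h hx.2.2
  have h2 : ∀ᵐ x ∂μ, Φ τ g x ≠ ⊥ := by
    have := lemD hτ hg hgi
    rw [ae_iff]
    simpa using this
  have h3 : ∀ᵐ x ∂μ, Φ τ (fun y => -g y) x ≠ ⊥ := by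
    have := lemD (g := fun y => -g y) hτ hg.neg hgi.neg
    rw [ae_iff]
    simpa using this
  filter_upwards [h1, h2, h3] with x hx1 hx2 hx3
  -- liminf equals -Φ(-g)
  have hliminf : liminf (fun n => ((A τ g n x : ℝ) : EReal)) atTop = -Φ τ (fun y => -g y) x := by
    rw [Φ]
    have : (fun n => ((A τ (fun y => -g y) n x : ℝ) : EReal))
        = -(fun n => ((A τ g n x : ℝ) : EReal)) := by
      funext n
      simp [A_neg]
    rw [this, EReal.limsup_neg, neg_neg]
  have hle : liminf (fun n => ((A τ g n x : ℝ) : EReal)) atTop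
      ≤ limsup (fun n => ((A τ g n x : ℝ) : EReal)) atTop := liminf_le_limsup
  have heq : liminf (fun n => ((A τ g n x : ℝ) : EReal)) atTop
      = limsup (fun n => ((A τ g n x : ℝ) : EReal)) atTop := by
    by_contra hne
    have hlt : liminf (fun n => ((A τ g n x : ℝ) : EReal)) atTop
        < limsup (fun n => ((A τ g n x : ℝ) : EReal)) atTop := lt_of_le_of_ne hle hne
    obtain ⟨q, hq1, hq2⟩ := EReal.exists_rat_btwn_of_lt hlt
    obtain ⟨r, hr1, hr2⟩ := EReal.exists_rat_btwn_of_lt hq2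
    apply hx1 (q, r)
    refine ⟨hr2, ?_, by exact_mod_cast hr1⟩
    rw [hliminf] at hq1
    have h'' : -(((q : ℝ)) : EReal) < Φ τ (fun y => -g y) x := EReal.neg_lt_comm.mp hq1
    rwa [EReal.coe_neg]
  -- the common value is a real number
  set L := limsup (fun n => ((A τ g n x : ℝ) : EReal)) atTop with hLdef
  have hLbot : L ≠ ⊥ := hx2
  have hLtop : L ≠ ⊤ := by
    intro hc
    apply hx3
    have : -Φ τ (fun y => -g y) x = ⊤ := by rw [← hliminf, heq]; exact hc
    rwa [EReal.neg_eq_top_iff] at this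
  have hex : ∀ y : EReal, y ≠ ⊥ → y ≠ ⊤ → ∃ r : ℝ, y = (r : EReal) := by
    intro y hy1 hy2
    induction y with
    | bot => exact absurd rfl hy1
    | coe r => exact ⟨r, rfl⟩
    | top => exact absurd rfl hy2
  obtain ⟨L', hL'⟩ := hex L hLbot hLtop
  refine ⟨L', ?_⟩
  have htendsto : Tendsto (fun n => ((A τ g n x : ℝ) : EReal)) atTop (𝓝 (L' : EReal)) := by
    apply tendsto_of_liminf_eq_limsup
    · rw [heq]; exact hL'
    · rw [← hLdef]; exact hL'
    · isBoundedDefault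
    · isBoundedDefault
  exact EReal.tendsto_coe.mp htendsto

end BirkhoffR0Aux

/-- Birkhoff individual ergodic theorem for functions in `R₀ = (L₁ + L∞)₀`:
if every truncation `f · 1_{|f| > λ}` is integrable, the Birkhoff averages
converge a.e. to a finite limit. -/
theorem birkhoff_R0_ae_tendsto {α : Type*} [MeasurableSpace α] (μ : Measure α)
    [SigmaFinite μ] (τ : α → α) (hτ : MeasurePreserving τ μ μ)
    (f : α → ℝ) (hf : Measurable f)
    (hR0 : ∀ l : ℝ, 0 < l → Integrable ({x | l < |f x|}.indicator f) μ) :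
    ∀ᵐ x ∂μ, ∃ L : ℝ,
      Tendsto (fun n : ℕ => (n : ℝ)⁻¹ * ∑ k ∈ Finset.range n, f (τ^[k] x))
        atTop (nhds L) := by
  classical
  set l : ℕ → ℝ := fun j => 1 / ((j : ℝ) + 1) with hldef
  have hlpos : ∀ j, 0 < l j := fun j => by positivity
  set g : ℕ → α → ℝ := fun j => ({x | l j < |f x|}).indicator f with hgdef
  have hgm : ∀ j, Measurable (g j) := fun j =>
    hf.indicator (measurableSet_lt measurable_const hf.abs)
  have hgi : ∀ j, Integrable (g j) μ := fun j => hR0 (l j) (hlpos j)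
  have hmain : ∀ᵐ x ∂μ, ∀ j : ℕ, ∃ L : ℝ,
      Tendsto (fun n => BirkhoffR0Aux.A τ (g j) n x) atTop (𝓝 L) := by
    rw [ae_all_iff]
    intro j
    exact BirkhoffR0Aux.birkhoff_L1 hτ (hgm j) (hgi j)
  filter_upwards [hmain] with x hx
  have hdiff : ∀ j n, |BirkhoffR0Aux.A τ f n x - BirkhoffR0Aux.A τ (g j) n x| ≤ l j := by
    intro j n
    have hr : ∀ y, |f y - g j y| ≤ l j := by
      intro y
      by_cases hy : y ∈ {z | l j < |f z|}
      · rw [hgdef]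
        simp only
        rw [Set.indicator_of_mem hy]
        simpa using (hlpos j).le
      · rw [hgdef]
        simp only
        rw [Set.indicator_of_notMem hy, sub_zero]
        simp only [Set.mem_setOf_eq, not_lt] at hy
        exact hy
    rcases Nat.eq_zero_or_pos n with rfl | hn
    · simpa [BirkhoffR0Aux.A, BirkhoffR0Aux.S] using (hlpos j).le
    · have hn0 : (0 : ℝ) < n := by exact_mod_cast hn
      have hsplit : BirkhoffR0Aux.A τ f n x - BirkhoffR0Aux.A τ (g j) n x
          = (n : ℝ)⁻¹ * ∑ k ∈ Finset.range n, (f (τ^[k] x) - g j (τ^[k] x)) := by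
        simp [BirkhoffR0Aux.A, BirkhoffR0Aux.S, Finset.sum_sub_distrib, mul_sub]
      rw [hsplit, abs_mul, abs_inv, abs_of_nonneg hn0.le]
      have hbd : |∑ k ∈ Finset.range n, (f (τ^[k] x) - g j (τ^[k] x))| ≤ (n : ℝ) * l j := by
        calc |∑ k ∈ Finset.range n, (f (τ^[k] x) - g j (τ^[k] x))|
            ≤ ∑ k ∈ Finset.range n, |f (τ^[k] x) - g j (τ^[k] x)| :=
              Finset.abs_sum_le_sum_abs _ _
          _ ≤ ∑ _k ∈ Finset.range n, l j := Finset.sum_le_sum fun k _ => hr _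
          _ = (n : ℝ) * l j := by simp [mul_comm]
      calc (n : ℝ)⁻¹ * |∑ k ∈ Finset.range n, (f (τ^[k] x) - g j (τ^[k] x))|
          ≤ (n : ℝ)⁻¹ * ((n : ℝ) * l j) :=
            mul_le_mul_of_nonneg_left hbd (by positivity)
        _ = l j := by field_simp
  have hcauchy : CauchySeq (fun n => BirkhoffR0Aux.A τ f n x) := by
    rw [Metric.cauchySeq_iff]
    intro ε hε
    obtain ⟨j, hj⟩ := exists_nat_gt (4 / ε)
    have hj4 : (4 : ℝ) / ε < (j : ℝ) + 1 := by
      have : (j : ℝ) ≤ (j : ℝ) + 1 := by linarith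
      linarith
    have hjl : l j < ε / 4 := by
      rw [hldef]
      simp only
      rw [div_lt_div_iff₀ (by positivity) (by norm_num)]
      rw [div_lt_iff₀ hε] at hj4
      nlinarith
    obtain ⟨L, hL⟩ := hx j
    have hCg : CauchySeq (fun n => BirkhoffR0Aux.A τ (g j) n x) := hL.cauchySeq
    rw [Metric.cauchySeq_iff] at hCg
    obtain ⟨N, hN⟩ := hCg (ε / 2) (by positivity)
    refine ⟨N, fun m hm n hn => ?_⟩
    have h1 := hdiff j m
    have h2 := hdiff j n
    have h3 := hN m hm n hn
    have tri : dist (BirkhoffR0Aux.A τ f m x) (BirkhoffR0Aux.A τ f n x)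
        ≤ dist (BirkhoffR0Aux.A τ f m x) (BirkhoffR0Aux.A τ (g j) m x)
          + dist (BirkhoffR0Aux.A τ (g j) m x) (BirkhoffR0Aux.A τ (g j) n x)
          + dist (BirkhoffR0Aux.A τ (g j) n x) (BirkhoffR0Aux.A τ f n x) :=
      dist_triangle4 _ _ _ _
    rw [Real.dist_eq] at tri
    rw [Real.dist_eq]
    rw [Real.dist_eq, Real.dist_eq, Real.dist_eq] at tri
    rw [abs_sub_comm (BirkhoffR0Aux.A τ (g j) n x)] at tri
    rw [Real.dist_eq] at h3
    linarith
  obtain ⟨L, hL⟩ := cauchySeq_tendsto_of_complete hcauchy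
  exact ⟨L, hL⟩
end

section
/- Let (α, μ) be a σ-finite measure space and τ : α → α a measure-preserving map. Let f : α → ℝ be measurable with f·1_{{|f|>λ}} integrable for every λ > 0 (i.e. f ∈ R₀). Then the Birkhoff averages Aₙf converge almost uniformly: there is a measurable function g such that for every ε > 0 there exists a measurable set E ⊆ α with μ(α \ E) < ε on which Aₙf converges to g uniformly. -/
open MeasureTheory Filter Finset
open scoped ENNReal Topology

set_option linter.unusedSectionVars false
set_option linter.unusedTactic false
set_option linter.unreachableTactic false
set_option linter.unnecessarySimpa false

section BirkhoffAux

variable {α : Type*} [MeasurableSpace α] {μ : Measure α} {τ : α → α}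




lemma measurable_birkhoffSum (hτ : Measurable τ) {h : α → ℝ} (hh : Measurable h) (n : ℕ) :
    Measurable (fun x => birkhoffSum τ h n x) :=
  Finset.measurable_sum _ fun k _ => hh.comp (hτ.iterate k)

lemma integrable_comp_iterate (hτ : MeasurePreserving τ μ μ) {h : α → ℝ}
    (hi : Integrable h μ) (k : ℕ) : Integrable (fun x => h (τ^[k] x)) μ := by
  have hp : MeasurePreserving τ^[k] μ μ := hτ.iterate k
  have : Integrable h (Measure.map τ^[k] μ) := by rwa [hp.map_eq]
  exact this.comp_measurable hp.measurable

lemma integrable_birkhoffSum (hτ : MeasurePreserving τ μ μ) {h : α → ℝ}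
    (hi : Integrable h μ) (n : ℕ) : Integrable (fun x => birkhoffSum τ h n x) μ := by
  simp only [birkhoffSum]
  exact integrable_finset_sum _ fun k _ => integrable_comp_iterate hτ hi k

lemma integral_comp_measurePreserving (hτ : MeasurePreserving τ μ μ) {h : α → ℝ}
    (hh : AEStronglyMeasurable h μ) : ∫ x, h (τ x) ∂μ = ∫ x, h x ∂μ := by
  rw [← MeasureTheory.integral_map hτ.measurable.aemeasurable (by rwa [hτ.map_eq]), hτ.map_eq]

/-- running maximum of Birkhoff sums `S_1, ..., S_N` together with `0`. -/
def maxS (τ : α → α) (h : α → ℝ) : ℕ → α → ℝ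
  | 0, _ => 0
  | (N+1), x => max (maxS τ h N x) (birkhoffSum τ h (N+1) x)

lemma maxS_nonneg (τ : α → α) (h : α → ℝ) (N : ℕ) (x : α) : 0 ≤ maxS τ h N x := by
  induction N with
  | zero => simp [maxS]
  | succ N ih => exact le_trans ih (le_max_left _ _)

lemma le_maxS (τ : α → α) (h : α → ℝ) {N n : ℕ} (hn : n ≤ N) (x : α) :
    birkhoffSum τ h n x ≤ maxS τ h N x := by
  induction N with
  | zero =>
    interval_cases n
    simp [maxS, birkhoffSum_zero]
  | succ N ih =>
    rcases Nat.lt_or_ge n (N+1) with hlt | hge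
    · exact le_trans (ih (Nat.lt_succ_iff.1 hlt)) (le_max_left _ _)
    · have : n = N + 1 := le_antisymm hn hge
      subst this
      exact le_max_right _ _
  termination_by N
  decreasing_by exact Nat.lt_succ_self N

lemma maxS_pos_exists (τ : α → α) (h : α → ℝ) {N : ℕ} {x : α} (hx : 0 < maxS τ h N x) :
    ∃ n, 1 ≤ n ∧ n ≤ N ∧ maxS τ h N x ≤ birkhoffSum τ h n x := by
  induction N with
  | zero => simp [maxS] at hx
  | succ N ih =>
    rcases le_total (birkhoffSum τ h (N+1) x) (maxS τ h N x) with hle | hle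
    · have hmax : maxS τ h (N+1) x = maxS τ h N x := max_eq_left hle
      rw [hmax] at hx ⊢
      obtain ⟨n, h1, h2, h3⟩ := ih hx
      exact ⟨n, h1, h2.trans (Nat.le_succ N), h3⟩
    · have hmax : maxS τ h (N+1) x = birkhoffSum τ h (N+1) x := max_eq_right hle
      exact ⟨N+1, Nat.succ_le_succ (Nat.zero_le N), le_refl _, hmax.le⟩

lemma measurable_maxS (hτ : Measurable τ) {h : α → ℝ} (hh : Measurable h) (N : ℕ) :
    Measurable (maxS τ h N) := by
  induction N with
  | zero => simpa [maxS] using measurable_const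
  | succ N ih => exact ih.max (measurable_birkhoffSum hτ hh (N+1))

lemma integrable_maxS (hτ : MeasurePreserving τ μ μ) {h : α → ℝ}
    (hi : Integrable h μ) (N : ℕ) : Integrable (maxS τ h N) μ := by
  induction N with
  | zero => simpa [maxS] using integrable_const (0:ℝ)
  | succ N ih =>
    have := ih.sup (integrable_birkhoffSum hτ hi (N+1))
    simpa [maxS, Pi.sup_def] using this

/-- Hopf's maximal ergodic lemma. -/
lemma hopf_maximal (hτ : MeasurePreserving τ μ μ) {h : α → ℝ} (hm : Measurable h)
    (hi : Integrable h μ) (N : ℕ) :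
    0 ≤ ∫ x in {x | ∃ n, 1 ≤ n ∧ n ≤ N ∧ 0 < birkhoffSum τ h n x}, h x ∂μ := by
  classical
  set E : Set α := {x | 0 < maxS τ h N x} with hE
  have hEeq : {x | ∃ n, 1 ≤ n ∧ n ≤ N ∧ 0 < birkhoffSum τ h n x} = E := by
    ext x
    constructor
    · rintro ⟨n, h1, h2, h3⟩
      exact lt_of_lt_of_le h3 (le_maxS τ h h2 x)
    · intro hx
      obtain ⟨n, h1, h2, h3⟩ := maxS_pos_exists τ h hx
      exact ⟨n, h1, h2, lt_of_lt_of_le hx h3⟩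
  rw [hEeq]
  have hMm : Measurable (maxS τ h N) := measurable_maxS hτ.measurable hm N
  have hMi : Integrable (maxS τ h N) μ := integrable_maxS hτ hi N
  have hMTi : Integrable (fun x => maxS τ h N (τ x)) μ := by
    have : Integrable (maxS τ h N) (Measure.map τ μ) := by rwa [hτ.map_eq]
    exact this.comp_measurable hτ.measurable
  have hEmeas : MeasurableSet E := measurableSet_lt measurable_const hMm
  set φ : α → ℝ := fun x => maxS τ h N x - maxS τ h N (τ x) with hφ
  have hφi : Integrable φ μ := hMi.sub hMTi
  -- pointwise bound on E
  have hpt : ∀ x ∈ E, φ x ≤ h x := by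
    intro x hx
    obtain ⟨n, h1, h2, h3⟩ := maxS_pos_exists τ h hx
    obtain ⟨m, rfl⟩ : ∃ m, n = m + 1 := ⟨n - 1, (Nat.succ_pred_eq_of_pos h1).symm⟩
    have hrec : birkhoffSum τ h (m+1) x = h x + birkhoffSum τ h m (τ x) :=
      birkhoffSum_succ' τ h m x
    have hle : birkhoffSum τ h m (τ x) ≤ maxS τ h N (τ x) :=
      le_maxS τ h (le_trans (Nat.le_succ m) h2) (τ x)
    have : maxS τ h N x ≤ h x + maxS τ h N (τ x) :=
      h3.trans (by rw [hrec]; linarith)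
    simpa [hφ] using by linarith
  -- integral of φ over all of α is 0
  have hint0 : ∫ x, φ x ∂μ = 0 := by
    rw [integral_sub hMi hMTi,
      integral_comp_measurePreserving hτ hMi.aestronglyMeasurable, sub_self]
  -- integral over complement is nonpositive
  have hcompl : ∫ x in Eᶜ, φ x ∂μ ≤ 0 := by
    apply setIntegral_nonpos hEmeas.compl
    intro x hx
    have hM0 : maxS τ h N x = 0 :=
      le_antisymm (not_lt.1 hx) (maxS_nonneg τ h N x)
    have := maxS_nonneg τ h N (τ x)
    simp only [hφ, hM0]
    linarith
  have hsplit : ∫ x in E, φ x ∂μ + ∫ x in Eᶜ, φ x ∂μ = 0 := by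
    rw [integral_add_compl hEmeas hφi, hint0]
  have hEφ : 0 ≤ ∫ x in E, φ x ∂μ := by linarith
  calc (0:ℝ) ≤ ∫ x in E, φ x ∂μ := hEφ
    _ ≤ ∫ x in E, h x ∂μ := setIntegral_mono_on hφi.integrableOn hi.integrableOn hEmeas hpt





lemma measurableSet_hopfSet (hτ : Measurable τ) {g : α → ℝ} (hg : Measurable g) (N : ℕ) :
    MeasurableSet {x | ∃ n, 1 ≤ n ∧ n ≤ N ∧ 0 < birkhoffSum τ g n x} := by
  have : {x | ∃ n, 1 ≤ n ∧ n ≤ N ∧ 0 < birkhoffSum τ g n x}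
      = ⋃ n, ⋃ (_ : 1 ≤ n ∧ n ≤ N), {x | 0 < birkhoffSum τ g n x} := by
    ext x; simp [Set.mem_iUnion]; tauto
  rw [this]
  exact MeasurableSet.iUnion fun n => MeasurableSet.iUnion fun _ =>
    measurableSet_lt measurable_const (measurable_birkhoffSum hτ hg n)

/-- The weak (1,1) maximal inequality for Birkhoff averages. -/
lemma maximal_weak [SigmaFinite μ] (hτ : MeasurePreserving τ μ μ) {h : α → ℝ}
    (hm : Measurable h) (hi : Integrable h μ) {c : ℝ} (hc : 0 < c) :
    μ {x | ∃ n, 1 ≤ n ∧ c * n < birkhoffSum τ (fun y => |h y|) n x}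
      ≤ ENNReal.ofReal (c⁻¹ * ∫ x, |h x| ∂μ) := by
  classical
  set habs : α → ℝ := fun y => |h y| with hhabs
  have hmabs : Measurable habs := hm.abs
  have hiabs : Integrable habs μ := hi.abs
  set I : ℝ := ∫ x, |h x| ∂μ with hI
  have hI0 : 0 ≤ I := integral_nonneg fun x => abs_nonneg _
  set F : ℕ → Set α := spanningSets μ with hF
  -- the key finite-level estimate
  have key : ∀ k N : ℕ, μ ({x | ∃ n, 1 ≤ n ∧ n ≤ N ∧ c * n < birkhoffSum τ habs n x} ∩ F k)
      ≤ ENNReal.ofReal (c⁻¹ * I) := by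
    intro k N
    set g : α → ℝ := fun x => habs x - c * Set.indicator (F k) (fun _ => (1:ℝ)) x with hg
    have hFmeas : MeasurableSet (F k) := measurableSet_spanningSets μ k
    have hFfin : μ (F k) < ∞ := measure_spanningSets_lt_top μ k
    have hindm : Measurable (Set.indicator (F k) (fun _ => (1:ℝ))) :=
      measurable_const.indicator hFmeas
    have hindi : Integrable (Set.indicator (F k) (fun _ => (1:ℝ))) μ := by
      rw [integrable_indicator_iff hFmeas]
      exact integrableOn_const hFfin.ne
    have hgm : Measurable g := hmabs.sub (hindm.const_mul c)
    have hgi : Integrable g μ := hiabs.sub (hindi.const_mul c)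
    set E : Set α := {x | ∃ n, 1 ≤ n ∧ n ≤ N ∧ 0 < birkhoffSum τ g n x} with hE
    have hEmeas : MeasurableSet E := measurableSet_hopfSet hτ.measurable hgm N
    have h0 : 0 ≤ ∫ x in E, g x ∂μ := hopf_maximal hτ hgm hgi N
    -- compute the integral of g over E
    have hsub : ∫ x in E, g x ∂μ
        = ∫ x in E, habs x ∂μ - ∫ x in E, c * Set.indicator (F k) (fun _ => (1:ℝ)) x ∂μ :=
      integral_sub hiabs.integrableOn (hindi.const_mul c).integrableOn
    have hindint : ∫ x in E, c * Set.indicator (F k) (fun _ => (1:ℝ)) x ∂μ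
        = c * (μ (E ∩ F k)).toReal := by
      rw [MeasureTheory.integral_const_mul, setIntegral_indicator hFmeas, setIntegral_const]
      simp [Measure.real]
    have habs_le : ∫ x in E, habs x ∂μ ≤ I :=
      setIntegral_le_integral hiabs (Filter.Eventually.of_forall fun x => abs_nonneg _)
    have hmain : c * (μ (E ∩ F k)).toReal ≤ I := by
      rw [hsub, hindint] at h0; linarith
    -- the maximal set (up to N) is contained in E
    have hsubset : {x | ∃ n, 1 ≤ n ∧ n ≤ N ∧ c * n < birkhoffSum τ habs n x} ⊆ E := by
      intro x hx
      obtain ⟨n, h1, h2, h3⟩ := hx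
      refine ⟨n, h1, h2, ?_⟩
      have hindsum : birkhoffSum τ (Set.indicator (F k) (fun _ => (1:ℝ))) n x ≤ n := by
        unfold birkhoffSum
        calc ∑ i ∈ range n, Set.indicator (F k) (fun _ => (1:ℝ)) (τ^[i] x)
            ≤ ∑ i ∈ range n, 1 :=
              Finset.sum_le_sum fun i _ => Set.indicator_le_self' (fun _ _ => zero_le_one) _
          _ = n := by simp
      have hgsum : birkhoffSum τ g n x
          = birkhoffSum τ habs n x - c * birkhoffSum τ (Set.indicator (F k) (fun _ => (1:ℝ))) n x := by
        unfold birkhoffSum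
        rw [Finset.mul_sum, ← Finset.sum_sub_distrib]
      rw [hgsum]
      have : c * birkhoffSum τ (Set.indicator (F k) (fun _ => (1:ℝ))) n x ≤ c * n :=
        mul_le_mul_of_nonneg_left hindsum hc.le
      linarith
    have hfin : μ ({x | ∃ n, 1 ≤ n ∧ n ≤ N ∧ c * n < birkhoffSum τ habs n x} ∩ F k) ≠ ∞ :=
      (lt_of_le_of_lt (measure_mono Set.inter_subset_right) hFfin).ne
    have hle : μ ({x | ∃ n, 1 ≤ n ∧ n ≤ N ∧ c * n < birkhoffSum τ habs n x} ∩ F k)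
        ≤ μ (E ∩ F k) := measure_mono (Set.inter_subset_inter_left _ hsubset)
    have htoReal : (μ ({x | ∃ n, 1 ≤ n ∧ n ≤ N ∧ c * n < birkhoffSum τ habs n x} ∩ F k)).toReal
        ≤ c⁻¹ * I := by
      have h1 : (μ ({x | ∃ n, 1 ≤ n ∧ n ≤ N ∧ c * n < birkhoffSum τ habs n x} ∩ F k)).toReal
          ≤ (μ (E ∩ F k)).toReal :=
        ENNReal.toReal_mono ((lt_of_le_of_lt (measure_mono Set.inter_subset_right) hFfin).ne) hle
      have h2 : (μ (E ∩ F k)).toReal ≤ c⁻¹ * I := by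
        rw [← mul_le_mul_iff_right₀ hc, ← mul_assoc, mul_inv_cancel₀ hc.ne', one_mul]
        exact hmain
      linarith
    calc μ ({x | ∃ n, 1 ≤ n ∧ n ≤ N ∧ c * n < birkhoffSum τ habs n x} ∩ F k)
        = ENNReal.ofReal ((μ ({x | ∃ n, 1 ≤ n ∧ n ≤ N ∧ c * n < birkhoffSum τ habs n x} ∩ F k)).toReal) :=
          (ENNReal.ofReal_toReal hfin).symm
      _ ≤ ENNReal.ofReal (c⁻¹ * I) := ENNReal.ofReal_le_ofReal htoReal
  -- pass to the limit in N and k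
  have keyk : ∀ k : ℕ, μ ({x | ∃ n, 1 ≤ n ∧ c * n < birkhoffSum τ habs n x} ∩ F k)
      ≤ ENNReal.ofReal (c⁻¹ * I) := by
    intro k
    have hunion : {x | ∃ n, 1 ≤ n ∧ c * n < birkhoffSum τ habs n x} ∩ F k
        = ⋃ N, ({x | ∃ n, 1 ≤ n ∧ n ≤ N ∧ c * n < birkhoffSum τ habs n x} ∩ F k) := by
      ext x
      simp only [Set.mem_inter_iff, Set.mem_setOf_eq, Set.mem_iUnion]
      constructor
      · rintro ⟨⟨n, h1, h2⟩, hxF⟩; exact ⟨n, ⟨⟨n, h1, le_refl n, h2⟩, hxF⟩⟩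
      · rintro ⟨N, ⟨⟨n, h1, _, h2⟩, hxF⟩⟩; exact ⟨⟨n, h1, h2⟩, hxF⟩
    rw [hunion]
    have hmono : Monotone (fun N => {x | ∃ n, 1 ≤ n ∧ n ≤ N ∧ c * n < birkhoffSum τ habs n x} ∩ F k) := by
      intro N M hNM x ⟨⟨n, h1, h2, h3⟩, hxF⟩
      exact ⟨⟨n, h1, h2.trans hNM, h3⟩, hxF⟩
    rw [Directed.measure_iUnion hmono.directed_le]
    exact iSup_le fun N => key k N
  have hunion2 : {x | ∃ n, 1 ≤ n ∧ c * n < birkhoffSum τ habs n x}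
      = ⋃ k, ({x | ∃ n, 1 ≤ n ∧ c * n < birkhoffSum τ habs n x} ∩ F k) := by
    rw [← Set.inter_iUnion, iUnion_spanningSets, Set.inter_univ]
  rw [hunion2]
  have hmono2 : Monotone (fun k => {x | ∃ n, 1 ≤ n ∧ c * n < birkhoffSum τ habs n x} ∩ F k) :=
    fun i j hij => Set.inter_subset_inter_right _ (monotone_spanningSets μ hij)
  rw [Directed.measure_iUnion hmono2.directed_le]
  exact iSup_le keyk




lemma iterate_mem_invariant {E : Set α} (hinv : τ ⁻¹' E = E) (k : ℕ) (x : α) :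
    (τ^[k] x ∈ E) ↔ (x ∈ E) := by
  induction k with
  | zero => simp
  | succ k ih =>
    rw [Function.iterate_succ_apply', ← ih]
    constructor
    · intro hmem
      have : τ^[k] x ∈ τ ⁻¹' E := hmem
      rwa [hinv] at this
    · intro hmem
      have : τ^[k] x ∈ τ ⁻¹' E := by rwa [hinv]
      exact this

/-- Key estimate: on a finite-measure invariant set where some Birkhoff average
exceeds `b`, the integral dominates `b * μ E`. -/
lemma key_invariant (hτ : MeasurePreserving τ μ μ) {h : α → ℝ} (hm : Measurable h)
    (hi : Integrable h μ) {E : Set α} (hEmeas : MeasurableSet E) (hinv : τ ⁻¹' E = E)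
    (hfin : μ E ≠ ∞) {b : ℝ}
    (hb : ∀ᵐ x ∂μ, x ∈ E → ∃ n, 1 ≤ n ∧ b * n < birkhoffSum τ h n x) :
    b * (μ E).toReal ≤ ∫ x in E, h x ∂μ := by
  classical
  set h' : α → ℝ := E.indicator (fun x => h x - b) with hh'
  have hm' : Measurable h' := (hm.sub measurable_const).indicator hEmeas
  have hconsti : Integrable (E.indicator (fun _ => b)) μ := by
    rw [integrable_indicator_iff hEmeas]
    exact integrableOn_const hfin
  have hi' : Integrable h' μ := by
    have : h' = E.indicator h - E.indicator (fun _ => b) := by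
      funext x
      by_cases hx : x ∈ E <;> simp [hh', Set.indicator, hx]
    rw [this]
    exact (hi.indicator hEmeas).sub hconsti
  -- birkhoff sums of h' on E and off E
  have hS_on : ∀ n : ℕ, ∀ x ∈ E, birkhoffSum τ h' n x = birkhoffSum τ h n x - n * b := by
    intro n x hx
    unfold birkhoffSum
    have : ∀ k ∈ range n, h' (τ^[k] x) = h (τ^[k] x) - b := by
      intro k _
      have : τ^[k] x ∈ E := (iterate_mem_invariant hinv k x).2 hx
      simp [hh', Set.indicator_of_mem this]
    rw [Finset.sum_congr rfl this, Finset.sum_sub_distrib]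
    simp [mul_comm]
  have hS_off : ∀ n : ℕ, ∀ x, x ∉ E → birkhoffSum τ h' n x = 0 := by
    intro n x hx
    unfold birkhoffSum
    apply Finset.sum_eq_zero
    intro k _
    have : τ^[k] x ∉ E := fun hc => hx ((iterate_mem_invariant hinv k x).1 hc)
    simp [hh', Set.indicator_of_notMem this]
  set EN : ℕ → Set α := fun N => {x | ∃ n, 1 ≤ n ∧ n ≤ N ∧ 0 < birkhoffSum τ h' n x} with hEN
  have hENmeas : ∀ N, MeasurableSet (EN N) := fun N => measurableSet_hopfSet hτ.measurable hm' N
  have hENmono : Monotone EN := by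
    intro N M hNM x ⟨n, h1, h2, h3⟩
    exact ⟨n, h1, h2.trans hNM, h3⟩
  have hENsub : ∀ N, EN N ⊆ E := by
    intro N x ⟨n, h1, h2, h3⟩
    by_contra hx
    rw [hS_off n x hx] at h3
    exact lt_irrefl 0 h3
  have hpos : ∀ N, 0 ≤ ∫ x in EN N, h' x ∂μ := fun N => hopf_maximal hτ hm' hi' N
  -- the union equals E up to null sets
  have haeeq : (⋃ N, EN N) =ᵐ[μ] E := by
    have h1 : μ ((⋃ N, EN N) \ E) = 0 := by
      rw [Set.diff_eq_empty.2 (Set.iUnion_subset hENsub)]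
      exact measure_empty
    have h2 : μ (E \ ⋃ N, EN N) = 0 := by
      refine measure_mono_null ?_ (ae_iff.1 hb)
      rintro x ⟨hxE, hxU⟩
      simp only [Set.mem_setOf_eq, Classical.not_imp]
      refine ⟨hxE, ?_⟩
      rintro ⟨n, hn1, hn2⟩
      apply hxU
      refine Set.mem_iUnion.2 ⟨n, n, hn1, le_refl n, ?_⟩
      rw [hS_on n x hxE]
      linarith
    exact MeasureTheory.ae_eq_set.2 ⟨h1, h2⟩
  have htendsto : Tendsto (fun N => ∫ x in EN N, h' x ∂μ) atTop
      (𝓝 (∫ x in ⋃ N, EN N, h' x ∂μ)) :=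
    tendsto_setIntegral_of_monotone hENmeas hENmono hi'.integrableOn
  have hlim : 0 ≤ ∫ x in ⋃ N, EN N, h' x ∂μ :=
    ge_of_tendsto htendsto (Filter.Eventually.of_forall hpos)
  have heq : ∫ x in ⋃ N, EN N, h' x ∂μ = ∫ x in E, h' x ∂μ := setIntegral_congr_set haeeq
  have heq2 : ∫ x in E, h' x ∂μ = ∫ x in E, h x ∂μ - b * (μ E).toReal := by
    have : ∫ x in E, h' x ∂μ = ∫ x in E, (h x - b) ∂μ := by
      apply setIntegral_congr_fun hEmeas
      intro x hx
      simp [hh', Set.indicator_of_mem hx]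
    rw [this, integral_sub hi.integrableOn (integrableOn_const hfin),
      setIntegral_const]
    simp [mul_comm, Measure.real]
  rw [heq, heq2] at hlim
  linarith




lemma abs_birkhoffSum_le (τ : α → α) (h : α → ℝ) (n : ℕ) (x : α) :
    |birkhoffSum τ h n x| ≤ birkhoffSum τ (fun y => |h y|) n x := by
  unfold birkhoffSum
  exact Finset.abs_sum_le_sum_abs _ _

lemma birkhoffSum_neg' (τ : α → α) (h : α → ℝ) (n : ℕ) (x : α) :
    birkhoffSum τ (fun y => -(h y)) n x = -birkhoffSum τ h n x := by
  unfold birkhoffSum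
  rw [← Finset.sum_neg_distrib]

/-- frequently the Birkhoff average is `< r`. -/
def freqLT (τ : α → α) (h : α → ℝ) (r : ℝ) : Set α :=
  {x | ∀ N : ℕ, ∃ n, N ≤ n ∧ (n:ℝ)⁻¹ * birkhoffSum τ h n x < r}

/-- frequently the Birkhoff average is `> r`. -/
def freqGT (τ : α → α) (h : α → ℝ) (r : ℝ) : Set α :=
  {x | ∀ N : ℕ, ∃ n, N ≤ n ∧ r < (n:ℝ)⁻¹ * birkhoffSum τ h n x}

lemma measurableSet_freqLT (hτ : Measurable τ) {h : α → ℝ} (hh : Measurable h) (r : ℝ) :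
    MeasurableSet (freqLT τ h r) := by
  have : freqLT τ h r
      = ⋂ N : ℕ, ⋃ n : ℕ, ⋃ (_ : N ≤ n), {x | (n:ℝ)⁻¹ * birkhoffSum τ h n x < r} := by
    ext x; simp [freqLT]
  rw [this]
  exact MeasurableSet.iInter fun N => MeasurableSet.iUnion fun n =>
    MeasurableSet.iUnion fun _ =>
      measurableSet_lt ((measurable_birkhoffSum hτ hh n).const_mul _) measurable_const

lemma measurableSet_freqGT (hτ : Measurable τ) {h : α → ℝ} (hh : Measurable h) (r : ℝ) :
    MeasurableSet (freqGT τ h r) := by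
  have : freqGT τ h r
      = ⋂ N : ℕ, ⋃ n : ℕ, ⋃ (_ : N ≤ n), {x | r < (n:ℝ)⁻¹ * birkhoffSum τ h n x} := by
    ext x; simp [freqGT]
  rw [this]
  exact MeasurableSet.iInter fun N => MeasurableSet.iUnion fun n =>
    MeasurableSet.iUnion fun _ =>
      measurableSet_lt measurable_const ((measurable_birkhoffSum hτ hh n).const_mul _)

/-- points where the Birkhoff averages of `|h|` are uniformly bounded. -/
def bddAvg (τ : α → α) (h : α → ℝ) : Set α :=
  {x | ∃ C : ℕ, ∀ n : ℕ, birkhoffSum τ (fun y => |h y|) n x ≤ C * n}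

lemma measurableSet_bddAvg (hτ : Measurable τ) {h : α → ℝ} (hh : Measurable h) :
    MeasurableSet (bddAvg τ h) := by
  have : bddAvg τ h
      = ⋃ C : ℕ, ⋂ n, {x | birkhoffSum τ (fun y => |h y|) n x ≤ (C:ℝ) * n} := by
    ext x; simp [bddAvg]
  rw [this]
  exact MeasurableSet.iUnion fun C => MeasurableSet.iInter fun n =>
    measurableSet_le (measurable_birkhoffSum hτ hh.abs n) measurable_const

lemma bddAvg_invariant (τ : α → α) (h : α → ℝ) : τ ⁻¹' bddAvg τ h = bddAvg τ h := by
  ext x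
  simp only [Set.mem_preimage, bddAvg, Set.mem_setOf_eq]
  constructor
  · rintro ⟨C, hC⟩
    refine ⟨C + ⌈|h x|⌉₊, ?_⟩
    intro n
    match n with
    | 0 => simp [birkhoffSum_zero]
    | (m+1) =>
      have hrec : birkhoffSum τ (fun y => |h y|) (m+1) x
          = |h x| + birkhoffSum τ (fun y => |h y|) m (τ x) := birkhoffSum_succ' τ _ m x
      have h1 := hC m
      have h2 : |h x| ≤ (⌈|h x|⌉₊ : ℝ) := Nat.le_ceil _
      have h3 : (⌈|h x|⌉₊ : ℝ) ≤ (⌈|h x|⌉₊ : ℝ) * (m+1) := by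
        nlinarith [Nat.cast_nonneg (α := ℝ) ⌈|h x|⌉₊, Nat.cast_nonneg (α := ℝ) m]
      have h4 : (C:ℝ) * m ≤ (C:ℝ) * (m+1) := by
        nlinarith [Nat.cast_nonneg (α := ℝ) C]
      push_cast
      push_cast at h1
      linarith [hrec]
  · rintro ⟨C, hC⟩
    refine ⟨2 * C + ⌈|h x|⌉₊, ?_⟩
    intro n
    match n with
    | 0 => simp [birkhoffSum_zero]
    | (m+1) =>
      have hrec : birkhoffSum τ (fun y => |h y|) (m+2) x
          = |h x| + birkhoffSum τ (fun y => |h y|) (m+1) (τ x) := birkhoffSum_succ' τ _ (m+1) x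
      have h1 := hC (m+2)
      have h2 : (0:ℝ) ≤ |h x| := abs_nonneg _
      have h3 : (0:ℝ) ≤ (C:ℝ) := Nat.cast_nonneg C
      have h4 : (0:ℝ) ≤ (⌈|h x|⌉₊:ℝ) := Nat.cast_nonneg _
      have h5 : (0:ℝ) ≤ (m:ℝ) := Nat.cast_nonneg m
      push_cast
      push_cast at h1
      nlinarith [hrec]

lemma bddAvg_conull [SigmaFinite μ] (hτ : MeasurePreserving τ μ μ) {h : α → ℝ}
    (hm : Measurable h) (hi : Integrable h μ) : μ (bddAvg τ h)ᶜ = 0 := by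
  set I := ∫ x, |h x| ∂μ with hI
  have hbound : ∀ C : ℕ, μ (bddAvg τ h)ᶜ ≤ ENNReal.ofReal (((C:ℝ)+1)⁻¹ * I) := by
    intro C
    have hsub : (bddAvg τ h)ᶜ ⊆ {x | ∃ n, 1 ≤ n ∧ ((C:ℝ)+1) * n < birkhoffSum τ (fun y => |h y|) n x} := by
      intro x hx
      simp only [Set.mem_compl_iff, bddAvg, Set.mem_setOf_eq, not_exists, not_forall, not_le] at hx
      obtain ⟨n, hn⟩ := hx (C+1)
      have hn1 : 1 ≤ n := by
        by_contra hc
        push_neg at hc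
        interval_cases n
        simp [birkhoffSum_zero] at hn
      refine ⟨n, hn1, ?_⟩
      push_cast at hn ⊢
      linarith
    calc μ (bddAvg τ h)ᶜ ≤ _ := measure_mono hsub
      _ ≤ ENNReal.ofReal (((C:ℝ)+1)⁻¹ * I) := maximal_weak hτ hm hi (by positivity)
  have htend : Tendsto (fun C : ℕ => ENNReal.ofReal (((C:ℝ)+1)⁻¹ * I)) atTop (𝓝 0) := by
    have h1 : Tendsto (fun C : ℕ => ((C:ℝ)+1)⁻¹ * I) atTop (𝓝 0) := by
      have := tendsto_one_div_add_atTop_nhds_zero_nat.mul_const I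
      simpa [one_div] using this
    have := ENNReal.tendsto_ofReal h1
    simpa using this
  have : μ (bddAvg τ h)ᶜ ≤ 0 := ge_of_tendsto' htend hbound
  exact le_antisymm this zero_le

lemma exists_N0 {D : ℝ} (hD : 0 ≤ D) {e : ℝ} (he : 0 < e) :
    ∃ N₀ : ℕ, 1 ≤ N₀ ∧ ∀ n : ℕ, N₀ ≤ n → D / n < e := by
  refine ⟨⌈D / e⌉₊ + 1, Nat.succ_le_succ (Nat.zero_le _), ?_⟩
  intro n hn
  have hnpos : (0:ℝ) < n := by
    have : 1 ≤ n := le_trans (Nat.succ_le_succ (Nat.zero_le _)) hn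
    exact_mod_cast Nat.lt_of_lt_of_le Nat.zero_lt_one this
  rw [div_lt_iff₀ hnpos]
  have h1 : D / e < n := by
    have h2 : (⌈D / e⌉₊ : ℝ) < n := by exact_mod_cast Nat.lt_of_lt_of_le (Nat.lt_succ_self _) hn
    exact lt_of_le_of_lt (Nat.le_ceil _) h2
  calc D = (D / e) * e := by field_simp
    _ < n * e := mul_lt_mul_of_pos_right h1 he
    _ = e * n := mul_comm _ _

lemma avg_shift_bound {h : α → ℝ} {x : α} {C : ℝ}
    (hC : ∀ n : ℕ, birkhoffSum τ (fun y => |h y|) n x ≤ C * n) {n : ℕ} (hn : 1 ≤ n) :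
    |(n:ℝ)⁻¹ * birkhoffSum τ h n (τ x) - (((n:ℕ)+1:ℝ))⁻¹ * birkhoffSum τ h (n+1) x|
      ≤ (C + |h x|) / n := by
  set s := birkhoffSum τ h (n+1) x with hs
  have hnpos : (0:ℝ) < n := by exact_mod_cast hn
  have hrec : birkhoffSum τ h n (τ x) = s - h x := by
    rw [hs, birkhoffSum_succ' τ h n x]; ring
  have habs : |s| ≤ C * (n+1) := by
    calc |s| ≤ birkhoffSum τ (fun y => |h y|) (n+1) x := abs_birkhoffSum_le τ h (n+1) x
      _ ≤ C * ((n:ℝ)+1) := by have := hC (n+1); push_cast at this; linarith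
  have hdiff : (n:ℝ)⁻¹ * birkhoffSum τ h n (τ x) - (((n:ℕ)+1:ℝ))⁻¹ * s
      = (s/((n:ℝ)+1) - h x)/n := by
    rw [hrec]; field_simp; ring
  rw [hdiff, abs_div, abs_of_pos hnpos]
  have h1 : |s/((n:ℝ)+1)| ≤ C := by
    rw [abs_div, abs_of_pos (by positivity : (0:ℝ) < (n:ℝ)+1),
      div_le_iff₀ (by positivity : (0:ℝ) < (n:ℝ)+1)]
    linarith [habs]
  have hnum : |s/((n:ℝ)+1) - h x| ≤ C + |h x| :=
    le_trans (abs_sub _ _) (by linarith)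
  gcongr

lemma freqGT_comp_iff {h : α → ℝ} {x : α} {C : ℝ}
    (hC : ∀ n : ℕ, birkhoffSum τ (fun y => |h y|) n x ≤ C * n) (r : ℝ) :
    (∀ ε : ℚ, 0 < ε → τ x ∈ freqGT τ h (r - ε)) ↔ (∀ ε : ℚ, 0 < ε → x ∈ freqGT τ h (r - ε)) := by
  have hC0 : 0 ≤ C := by
    have h1 := hC 1
    simp only [birkhoffSum_one, Nat.cast_one, mul_one] at h1
    linarith [abs_nonneg (h x)]
  have hD : 0 ≤ C + |h x| := add_nonneg hC0 (abs_nonneg _)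
  constructor
  · intro H ε hε N
    have hεR : (0:ℝ) < (ε:ℝ) := by exact_mod_cast hε
    obtain ⟨N₀, hN₀1, hN₀⟩ := exists_N0 hD (half_pos hεR)
    obtain ⟨n, hn1, hn2⟩ := H (ε/2) (by positivity) (max N N₀)
    have hnN₀ : N₀ ≤ n := le_trans (le_max_right _ _) hn1
    have hn1' : 1 ≤ n := le_trans hN₀1 hnN₀
    have hb := avg_shift_bound hC hn1'
    have hlt : (C + |h x|)/n < (ε:ℝ)/2 := hN₀ n hnN₀
    refine ⟨n+1, le_trans (le_max_left _ _) (le_trans hn1 (Nat.le_succ n)), ?_⟩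
    have hcast : ((ε/2 : ℚ):ℝ) = (ε:ℝ)/2 := by push_cast; ring
    rw [hcast] at hn2
    have h5 : (n:ℝ)⁻¹ * birkhoffSum τ h n (τ x) - (((n:ℕ)+1:ℝ))⁻¹ * birkhoffSum τ h (n+1) x
        ≤ (C + |h x|)/n := (abs_le.1 hb).2
    push_cast at h5 hn2 ⊢
    linarith
  · intro H ε hε N
    have hεR : (0:ℝ) < (ε:ℝ) := by exact_mod_cast hε
    obtain ⟨N₀, hN₀1, hN₀⟩ := exists_N0 hD (half_pos hεR)
    obtain ⟨n, hn1, hn2⟩ := H (ε/2) (by positivity) (max (N+1) (N₀+1))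
    obtain ⟨m, rfl⟩ : ∃ m, n = m + 1 :=
      ⟨n - 1, (Nat.succ_pred_eq_of_pos
        (lt_of_lt_of_le (Nat.succ_pos N) (le_trans (le_max_left _ _) hn1))).symm⟩
    have hmN : N ≤ m := Nat.succ_le_succ_iff.1 (le_trans (le_max_left _ _) hn1)
    have hmN₀ : N₀ ≤ m := Nat.succ_le_succ_iff.1 (le_trans (le_max_right _ _) hn1)
    have hm1 : 1 ≤ m := le_trans hN₀1 hmN₀
    have hb := avg_shift_bound hC hm1
    have hlt : (C + |h x|)/m < (ε:ℝ)/2 := hN₀ m hmN₀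
    refine ⟨m, hmN, ?_⟩
    have hcast : ((ε/2 : ℚ):ℝ) = (ε:ℝ)/2 := by push_cast; ring
    rw [hcast] at hn2
    have h5 : (((m:ℕ)+1:ℝ))⁻¹ * birkhoffSum τ h (m+1) x - (m:ℝ)⁻¹ * birkhoffSum τ h m (τ x)
        ≤ (C + |h x|)/m := by
      have := (abs_le.1 hb).1; linarith
    push_cast at h5 hn2 ⊢
    linarith

lemma freqLT_comp_iff {h : α → ℝ} {x : α} {C : ℝ}
    (hC : ∀ n : ℕ, birkhoffSum τ (fun y => |h y|) n x ≤ C * n) (r : ℝ) :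
    (∀ ε : ℚ, 0 < ε → τ x ∈ freqLT τ h (r + ε)) ↔ (∀ ε : ℚ, 0 < ε → x ∈ freqLT τ h (r + ε)) := by
  have hC0 : 0 ≤ C := by
    have h1 := hC 1
    simp only [birkhoffSum_one, Nat.cast_one, mul_one] at h1
    linarith [abs_nonneg (h x)]
  have hD : 0 ≤ C + |h x| := add_nonneg hC0 (abs_nonneg _)
  constructor
  · intro H ε hε N
    have hεR : (0:ℝ) < (ε:ℝ) := by exact_mod_cast hε
    obtain ⟨N₀, hN₀1, hN₀⟩ := exists_N0 hD (half_pos hεR)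
    obtain ⟨n, hn1, hn2⟩ := H (ε/2) (by positivity) (max N N₀)
    have hnN₀ : N₀ ≤ n := le_trans (le_max_right _ _) hn1
    have hn1' : 1 ≤ n := le_trans hN₀1 hnN₀
    have hb := avg_shift_bound hC hn1'
    have hlt : (C + |h x|)/n < (ε:ℝ)/2 := hN₀ n hnN₀
    refine ⟨n+1, le_trans (le_max_left _ _) (le_trans hn1 (Nat.le_succ n)), ?_⟩
    have hcast : ((ε/2 : ℚ):ℝ) = (ε:ℝ)/2 := by push_cast; ring
    rw [hcast] at hn2
    have h5 : (((n:ℕ)+1:ℝ))⁻¹ * birkhoffSum τ h (n+1) x - (n:ℝ)⁻¹ * birkhoffSum τ h n (τ x)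
        ≤ (C + |h x|)/n := by
      have := (abs_le.1 hb).1; linarith
    push_cast at h5 hn2 ⊢
    linarith
  · intro H ε hε N
    have hεR : (0:ℝ) < (ε:ℝ) := by exact_mod_cast hε
    obtain ⟨N₀, hN₀1, hN₀⟩ := exists_N0 hD (half_pos hεR)
    obtain ⟨n, hn1, hn2⟩ := H (ε/2) (by positivity) (max (N+1) (N₀+1))
    obtain ⟨m, rfl⟩ : ∃ m, n = m + 1 :=
      ⟨n - 1, (Nat.succ_pred_eq_of_pos
        (lt_of_lt_of_le (Nat.succ_pos N) (le_trans (le_max_left _ _) hn1))).symm⟩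
    have hmN : N ≤ m := Nat.succ_le_succ_iff.1 (le_trans (le_max_left _ _) hn1)
    have hmN₀ : N₀ ≤ m := Nat.succ_le_succ_iff.1 (le_trans (le_max_right _ _) hn1)
    have hm1 : 1 ≤ m := le_trans hN₀1 hmN₀
    have hb := avg_shift_bound hC hm1
    have hlt : (C + |h x|)/m < (ε:ℝ)/2 := hN₀ m hmN₀
    refine ⟨m, hmN, ?_⟩
    have hcast : ((ε/2 : ℚ):ℝ) = (ε:ℝ)/2 := by push_cast; ring
    rw [hcast] at hn2
    have h5 : (m:ℝ)⁻¹ * birkhoffSum τ h m (τ x) - (((m:ℕ)+1:ℝ))⁻¹ * birkhoffSum τ h (m+1) x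
        ≤ (C + |h x|)/m := (abs_le.1 hb).2
    push_cast at h5 hn2 ⊢
    linarith

/-- The "oscillation" set between levels `a < b`. -/
def nullEab (τ : α → α) (h : α → ℝ) (a b : ℚ) : Set α :=
  bddAvg τ h ∩ ((⋂ ε : ℚ, ⋂ (_ : 0 < ε), freqLT τ h ((a:ℝ) + ε))
    ∩ (⋂ ε : ℚ, ⋂ (_ : 0 < ε), freqGT τ h ((b:ℝ) - ε)))

lemma measurableSet_nullEab (hτ : Measurable τ) {h : α → ℝ} (hm : Measurable h) (a b : ℚ) :
    MeasurableSet (nullEab τ h a b) :=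
  (measurableSet_bddAvg hτ hm).inter
    (((MeasurableSet.iInter fun ε => MeasurableSet.iInter fun _ =>
        measurableSet_freqLT hτ hm _).inter
      (MeasurableSet.iInter fun ε => MeasurableSet.iInter fun _ =>
        measurableSet_freqGT hτ hm _)))

lemma mem_nullEab_iff {h : α → ℝ} {a b : ℚ} {x : α} :
    x ∈ nullEab τ h a b ↔ x ∈ bddAvg τ h
      ∧ (∀ ε : ℚ, 0 < ε → x ∈ freqLT τ h ((a:ℝ) + ε))
      ∧ (∀ ε : ℚ, 0 < ε → x ∈ freqGT τ h ((b:ℝ) - ε)) := by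
  simp [nullEab, Set.mem_iInter, and_assoc]

lemma nullEab_invariant (τ : α → α) (h : α → ℝ) (a b : ℚ) :
    τ ⁻¹' nullEab τ h a b = nullEab τ h a b := by
  ext x
  have hBiff : τ x ∈ bddAvg τ h ↔ x ∈ bddAvg τ h := by
    constructor
    · intro hB
      have : x ∈ τ ⁻¹' bddAvg τ h := hB
      rwa [bddAvg_invariant] at this
    · intro hB
      have : x ∈ τ ⁻¹' bddAvg τ h := by rwa [bddAvg_invariant]
      exact this
  constructor
  · intro hx
    rw [Set.mem_preimage, mem_nullEab_iff] at hx
    obtain ⟨hB, hL, hG⟩ := hx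
    have hxB : x ∈ bddAvg τ h := hBiff.1 hB
    obtain ⟨C, hC⟩ := id hxB
    rw [mem_nullEab_iff]
    exact ⟨hxB, (freqLT_comp_iff hC (a:ℝ)).1 hL, (freqGT_comp_iff hC (b:ℝ)).1 hG⟩
  · intro hx
    rw [mem_nullEab_iff] at hx
    obtain ⟨hxB, hL, hG⟩ := hx
    obtain ⟨C, hC⟩ := id hxB
    rw [Set.mem_preimage, mem_nullEab_iff]
    exact ⟨hBiff.2 hxB, (freqLT_comp_iff hC (a:ℝ)).2 hL, (freqGT_comp_iff hC (b:ℝ)).2 hG⟩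

lemma nullEab_null [SigmaFinite μ] (hτ : MeasurePreserving τ μ μ) {h : α → ℝ}
    (hm : Measurable h) (hi : Integrable h μ) {a b : ℚ} (hab : a < b) :
    μ (nullEab τ h a b) = 0 := by
  set ε₀ : ℚ := (b - a)/4 with hε₀
  have hε₀pos : 0 < ε₀ := div_pos (sub_pos.2 hab) (by norm_num)
  have hε₀R : ((ε₀:ℚ):ℝ) = ((b:ℝ) - (a:ℝ))/4 := by rw [hε₀]; push_cast; ring
  have hEmeas := measurableSet_nullEab hτ.measurable hm a b
  have hEinv := nullEab_invariant τ h a b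
  -- upper ae hypothesis from freqGT
  have hGpt : ∀ x ∈ nullEab τ h a b, ∃ n, 1 ≤ n ∧ ((b:ℝ) - ε₀) * n < birkhoffSum τ h n x := by
    intro x hx
    obtain ⟨n, hn1, hn2⟩ := (mem_nullEab_iff.1 hx).2.2 ε₀ hε₀pos 1
    have hnpos : (0:ℝ) < n := by exact_mod_cast hn1
    refine ⟨n, hn1, ?_⟩
    have := mul_lt_mul_of_pos_left hn2 hnpos
    rwa [← mul_assoc, mul_inv_cancel₀ hnpos.ne', one_mul, mul_comm] at this
  have hLpt : ∀ x ∈ nullEab τ h a b, ∃ n, 1 ≤ n ∧ birkhoffSum τ h n x < ((a:ℝ) + ε₀) * n := by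
    intro x hx
    obtain ⟨n, hn1, hn2⟩ := (mem_nullEab_iff.1 hx).2.1 ε₀ hε₀pos 1
    have hnpos : (0:ℝ) < n := by exact_mod_cast hn1
    refine ⟨n, hn1, ?_⟩
    have := mul_lt_mul_of_pos_left hn2 hnpos
    rw [← mul_assoc, mul_inv_cancel₀ hnpos.ne', one_mul] at this
    linarith [mul_comm (n:ℝ) ((a:ℝ)+(ε₀:ℝ))]
  -- finiteness
  have hfin : μ (nullEab τ h a b) ≠ ∞ := by
    rcases lt_or_ge 0 ((b:ℝ) - ε₀) with hcase | hcase
    · have hsub : nullEab τ h a b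
          ⊆ {x | ∃ n, 1 ≤ n ∧ ((b:ℝ) - ε₀) * n < birkhoffSum τ (fun y => |h y|) n x} := by
        intro x hx
        obtain ⟨n, hn1, hn2⟩ := hGpt x hx
        exact ⟨n, hn1, lt_of_lt_of_le hn2
          (le_trans (le_abs_self _) (abs_birkhoffSum_le τ h n x))⟩
      exact (lt_of_le_of_lt (measure_mono hsub)
        (lt_of_le_of_lt (maximal_weak hτ hm hi hcase) ENNReal.ofReal_lt_top)).ne
    · have habR' : (a:ℝ) < (b:ℝ) := by exact_mod_cast hab
      have hcase' : (0:ℝ) < -((a:ℝ) + ε₀) := by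
        rw [hε₀R] at hcase ⊢
        linarith
      have hsub : nullEab τ h a b
          ⊆ {x | ∃ n, 1 ≤ n ∧ (-((a:ℝ) + ε₀)) * n < birkhoffSum τ (fun y => |h y|) n x} := by
        intro x hx
        obtain ⟨n, hn1, hn2⟩ := hLpt x hx
        refine ⟨n, hn1, ?_⟩
        have habs := abs_birkhoffSum_le τ h n x
        have : -birkhoffSum τ h n x ≤ birkhoffSum τ (fun y => |h y|) n x :=
          le_trans (neg_le_abs _) habs
        nlinarith
      exact (lt_of_le_of_lt (measure_mono hsub)
        (lt_of_le_of_lt (maximal_weak hτ hm hi hcase') ENNReal.ofReal_lt_top)).ne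
  -- key estimates
  have h1 := key_invariant hτ hm hi hEmeas hEinv hfin
    (ae_of_all _ hGpt)
  have hLpt' : ∀ x ∈ nullEab τ h a b,
      ∃ n, 1 ≤ n ∧ (-((a:ℝ) + ε₀)) * n < birkhoffSum τ (fun y => -(h y)) n x := by
    intro x hx
    obtain ⟨n, hn1, hn2⟩ := hLpt x hx
    refine ⟨n, hn1, ?_⟩
    rw [birkhoffSum_neg']
    nlinarith
  have h2 := key_invariant hτ hm.neg hi.neg hEmeas hEinv hfin
    (ae_of_all _ hLpt')
  beta_reduce at h2
  simp only [Pi.neg_apply, integral_neg] at h2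
  set t := (μ (nullEab τ h a b)).toReal with ht
  have ht0 : 0 ≤ t := ENNReal.toReal_nonneg
  have hcoef : ((b:ℝ) - ε₀) - ((a:ℝ) + ε₀) = ((b:ℝ) - (a:ℝ))/2 := by rw [hε₀R]; ring
  have habR : (a:ℝ) < (b:ℝ) := by exact_mod_cast hab
  have htz : t = 0 := by nlinarith
  have := ENNReal.toReal_eq_zero_iff (μ (nullEab τ h a b))
  rcases this.1 htz with h0 | h0
  · exact h0
  · exact absurd h0 hfin

/-- Birkhoff's pointwise ergodic theorem, a.e. convergence form. -/
lemma ae_tendsto_birkhoff [SigmaFinite μ] (hτ : MeasurePreserving τ μ μ) {h : α → ℝ}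
    (hm : Measurable h) (hi : Integrable h μ) :
    ∀ᵐ x ∂μ, ∃ c : ℝ, Tendsto (fun n : ℕ => (n:ℝ)⁻¹ * birkhoffSum τ h n x) atTop (𝓝 c) := by
  have hnull : μ ((bddAvg τ h)ᶜ ∪ ⋃ (p : ℚ × ℚ), ⋃ (_ : p.1 < p.2), nullEab τ h p.1 p.2) = 0 := by
    apply measure_union_null (bddAvg_conull hτ hm hi)
    exact measure_iUnion_null fun p => measure_iUnion_null fun hp => nullEab_null hτ hm hi hp
  have hae := MeasureTheory.measure_eq_zero_iff_ae_notMem.1 hnull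
  filter_upwards [hae] with x hx
  have hxB : x ∈ bddAvg τ h := by
    by_contra hc
    exact hx (Or.inl hc)
  have hxE : ∀ a b : ℚ, a < b → x ∉ nullEab τ h a b := by
    intro a b hab hc
    exact hx (Or.inr (Set.mem_iUnion.2 ⟨(a, b), Set.mem_iUnion.2 ⟨hab, hc⟩⟩))
  obtain ⟨C, hC⟩ := hxB
  set u : ℕ → ℝ := fun n => (n:ℝ)⁻¹ * birkhoffSum τ h n x with hu
  have hbdd : ∀ n, |u n| ≤ C := by
    intro n
    match n with
    | 0 =>
      simp only [hu, birkhoffSum_zero, mul_zero, abs_zero]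
      have := hC 1
      simp only [birkhoffSum_one, Nat.cast_one, mul_one] at this
      exact le_trans (abs_nonneg (h x)) this
    | (m+1) =>
      have hnpos : (0:ℝ) < ((m:ℕ)+1:ℝ) := by positivity
      have h1 : |birkhoffSum τ h (m+1) x| ≤ (C:ℝ) * ((m:ℕ)+1:ℝ) := by
        refine le_trans (abs_birkhoffSum_le τ h (m+1) x) ?_
        have := hC (m+1); push_cast at this ⊢; linarith
      simp only [hu]
      rw [abs_mul, abs_inv, abs_of_pos (by positivity : (0:ℝ) < ((m+1:ℕ):ℝ))]
      rw [inv_mul_le_iff₀ (by positivity : (0:ℝ) < ((m+1:ℕ):ℝ))]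
      push_cast at h1 ⊢
      linarith
  have hble : IsBoundedUnder (· ≤ ·) atTop u :=
    isBoundedUnder_of ⟨(C:ℝ), fun n => (abs_le.1 (hbdd n)).2⟩
  have hbge : IsBoundedUnder (· ≥ ·) atTop u :=
    isBoundedUnder_of ⟨-(C:ℝ), fun n => (abs_le.1 (hbdd n)).1⟩
  by_contra hnc
  push_neg at hnc
  have hne : liminf u atTop ≠ limsup u atTop := by
    intro heq
    exact hnc (limsup u atTop) (tendsto_of_liminf_eq_limsup heq rfl hble hbge)
  have hlt : liminf u atTop < limsup u atTop :=
    lt_of_le_of_ne (liminf_le_limsup hble hbge) hne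
  obtain ⟨a, ha1, ha2⟩ := exists_rat_btwn hlt
  obtain ⟨b, hb1, hb2⟩ := exists_rat_btwn ha2
  have hab : a < b := by exact_mod_cast hb1
  apply hxE a b hab
  rw [mem_nullEab_iff]
  refine ⟨⟨C, hC⟩, ?_, ?_⟩
  · intro ε hε N
    have hεR : (0:ℝ) < (ε:ℝ) := by exact_mod_cast hε
    have hfr : ∃ᶠ n in atTop, u n < (a:ℝ) + (ε:ℝ) :=
      frequently_lt_of_liminf_lt hble.isCoboundedUnder_ge (by linarith)
    obtain ⟨n, hn1, hn2⟩ := (frequently_atTop.1 hfr) N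
    exact ⟨n, hn1, hn2⟩
  · intro ε hε N
    have hεR : (0:ℝ) < (ε:ℝ) := by exact_mod_cast hε
    have hfr : ∃ᶠ n in atTop, (b:ℝ) - (ε:ℝ) < u n :=
      frequently_lt_of_lt_limsup hbge.isCoboundedUnder_le (by linarith)
    obtain ⟨n, hn1, hn2⟩ := (frequently_atTop.1 hfr) N
    exact ⟨n, hn1, hn2⟩




lemma exists_measurable_limit {u : ℕ → α → ℝ} (hu : ∀ n, Measurable (u n)) :
    ∃ g : α → ℝ, Measurable g ∧ ∀ x, (∃ c, Tendsto (fun n => u n x) atTop (𝓝 c)) →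
      Tendsto (fun n => u n x) atTop (𝓝 (g x)) := by
  classical
  set Cs : Set α := {x | ∃ c, Tendsto (fun n => u n x) atTop (𝓝 c)} with hCs
  have hCsm : MeasurableSet Cs := measurableSet_exists_tendsto hu
  set u' : ℕ → α → ℝ := fun n => Cs.piecewise (u n) 0 with hu'
  have hu'm : ∀ n, Measurable (u' n) := fun n =>
    Measurable.piecewise hCsm (hu n) measurable_const
  have hconv : ∀ x, ∃ c, Tendsto (fun n => u' n x) atTop (𝓝 c) := by
    intro x
    by_cases hx : x ∈ Cs
    · obtain ⟨c, hc⟩ := id hx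
      have heq : (fun n => u' n x) = (fun n => u n x) :=
        funext fun n => Set.piecewise_eq_of_mem _ _ _ hx
      exact ⟨c, heq ▸ hc⟩
    · refine ⟨0, ?_⟩
      simp only [hu', Set.piecewise_eq_of_notMem _ _ _ hx, Pi.zero_apply]
      exact tendsto_const_nhds
  choose g hg using hconv
  refine ⟨g, ?_, ?_⟩
  · exact measurable_of_tendsto_metrizable hu'm (tendsto_pi_nhds.2 hg)
  · intro x hx
    have h1 : Tendsto (fun n => u' n x) atTop (𝓝 (g x)) := hg x
    have h2 : ∀ n, u' n x = u n x := fun n => Set.piecewise_eq_of_mem _ _ _ hx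
    simpa [h2] using h1

lemma exists_ae_limit [SigmaFinite μ] (hτ : MeasurePreserving τ μ μ) {h : α → ℝ}
    (hm : Measurable h) (hi : Integrable h μ) :
    ∃ g : α → ℝ, Measurable g ∧
      ∀ᵐ x ∂μ, Tendsto (fun n : ℕ => (n:ℝ)⁻¹ * birkhoffSum τ h n x) atTop (𝓝 (g x)) := by
  obtain ⟨g, hgm, hg⟩ := exists_measurable_limit
    (u := fun (n : ℕ) x => (n:ℝ)⁻¹ * birkhoffSum τ h n x)
    (fun n => (measurable_birkhoffSum hτ.measurable hm n).const_mul _)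
  exact ⟨g, hgm, by filter_upwards [ae_tendsto_birkhoff hτ hm hi] with x hx using hg x hx⟩

lemma tsum_quarter {ε : ℝ} (hε : 0 < ε) :
    (∑' j : ℕ, ENNReal.ofReal (ε/4 * (1/2)^j)) < ENNReal.ofReal ε := by
  have h1 : ∀ j:ℕ, ENNReal.ofReal (ε/4 * (1/2)^j)
      = ENNReal.ofReal (ε/4) * (ENNReal.ofReal (1/2))^j := by
    intro j
    rw [ENNReal.ofReal_mul (by positivity), ENNReal.ofReal_pow (by norm_num)]
  rw [tsum_congr h1, ENNReal.tsum_mul_left, ENNReal.tsum_geometric]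
  have h2 : ((1:ℝ≥0∞) - ENNReal.ofReal (1/2))⁻¹ = 2 := by
    rw [show (1:ℝ≥0∞) = ENNReal.ofReal 1 by simp,
      ← ENNReal.ofReal_sub _ (by norm_num : (0:ℝ) ≤ 1/2),
      show (1:ℝ) - 1/2 = 2⁻¹ by norm_num,
      ENNReal.ofReal_inv_of_pos (by norm_num : (0:ℝ) < 2), inv_inv]
    simp
  rw [h2, show (2:ℝ≥0∞) = ENNReal.ofReal 2 by simp, ← ENNReal.ofReal_mul (by positivity)]
  rw [ENNReal.ofReal_lt_ofReal_iff hε]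
  linarith

/-- Almost uniform convergence of Birkhoff averages for an integrable function. -/
lemma almost_uniform_L1 [SigmaFinite μ] (hτ : MeasurePreserving τ μ μ) {h : α → ℝ}
    (hm : Measurable h) (hi : Integrable h μ) :
    ∃ g : α → ℝ, Measurable g ∧ ∀ ε : ℝ, 0 < ε → ∃ E : Set α, MeasurableSet E ∧
      μ Eᶜ < ENNReal.ofReal ε ∧
      TendstoUniformlyOn (fun (n : ℕ) x => (n:ℝ)⁻¹ * birkhoffSum τ h n x) g atTop E := by
  classical
  obtain ⟨g, hgm, hg⟩ := exists_ae_limit hτ hm hi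
  refine ⟨g, hgm, ?_⟩
  intro ε hε
  set A : ℕ → α → ℝ := fun n x => (n:ℝ)⁻¹ * birkhoffSum τ h n x with hA
  have hAm : ∀ n, Measurable (A n) :=
    fun n => (measurable_birkhoffSum hτ.measurable hm n).const_mul _
  set c : ℕ → ℝ := fun j => ((j:ℝ)+1)⁻¹ with hc
  have hcpos : ∀ j, 0 < c j := fun j => by positivity
  set G : ℕ → Set α := fun j =>
    {x | ∃ n, 1 ≤ n ∧ c j * n < birkhoffSum τ (fun y => |h y|) n x} with hG
  have hGmeas : ∀ j, MeasurableSet (G j) := by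
    intro j
    have : G j = ⋃ n : ℕ, ⋃ (_ : 1 ≤ n),
        {x | c j * n < birkhoffSum τ (fun y => |h y|) n x} := by
      ext x; simp [hG]
    rw [this]
    exact MeasurableSet.iUnion fun n => MeasurableSet.iUnion fun _ =>
      measurableSet_lt measurable_const (measurable_birkhoffSum hτ.measurable hm.abs n)
  have hGfin : ∀ j, μ (G j) ≠ ∞ := fun j =>
    (lt_of_le_of_lt (maximal_weak hτ hm hi (hcpos j)) ENNReal.ofReal_lt_top).ne
  have key : ∀ j : ℕ, ∃ t, t ⊆ G j ∧ MeasurableSet t ∧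
      μ t ≤ ENNReal.ofReal (ε/4 * (1/2)^j) ∧ TendstoUniformlyOn A g atTop (G j \ t) := by
    intro j
    obtain ⟨t, h1, h2, h3, h4⟩ := tendstoUniformlyOn_of_ae_tendsto
      (fun n => (hAm n).stronglyMeasurable) hgm.stronglyMeasurable (hGmeas j) (hGfin j)
      (hg.mono fun x hx _ => hx) (show (0:ℝ) < ε/4 * (1/2)^j by positivity)
    exact ⟨t, h1, h2, h3, h4⟩
  choose t hts htm htμ htu using key
  set T : Set α := {x | Tendsto (fun n => A n x) atTop (𝓝 (g x))} with hT
  have hTmeas : MeasurableSet T := measurableSet_tendsto_fun hAm hgm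
  have hTae : μ Tᶜ = 0 := by
    rw [measure_eq_zero_iff_ae_notMem]
    filter_upwards [hg] with x hx
    simp only [Set.mem_compl_iff, Set.mem_setOf_eq, not_not, hT]
    exact hx
  set E : Set α := (⋂ j, ((G j \ t j) ∪ (G j)ᶜ)) ∩ T with hE
  have hEmeas : MeasurableSet E :=
    (MeasurableSet.iInter fun j => ((hGmeas j).diff (htm j)).union (hGmeas j).compl).inter hTmeas
  refine ⟨E, hEmeas, ?_, ?_⟩
  · -- measure bound
    have hEc : Eᶜ = (⋃ j, ((G j \ t j) ∪ (G j)ᶜ)ᶜ) ∪ Tᶜ := by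
      rw [hE, Set.compl_inter, Set.compl_iInter]
    have hsub : ∀ j, ((G j \ t j) ∪ (G j)ᶜ)ᶜ ⊆ t j := by
      intro j x hx
      simp only [Set.mem_compl_iff, Set.mem_union, not_or, Set.mem_diff, not_and, not_not] at hx
      exact hx.1 hx.2
    calc μ Eᶜ ≤ μ (⋃ j, ((G j \ t j) ∪ (G j)ᶜ)ᶜ) + μ Tᶜ := by rw [hEc]; exact measure_union_le _ _
      _ = μ (⋃ j, ((G j \ t j) ∪ (G j)ᶜ)ᶜ) := by rw [hTae, add_zero]
      _ ≤ ∑' j, μ (((G j \ t j) ∪ (G j)ᶜ)ᶜ) := measure_iUnion_le _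
      _ ≤ ∑' j, ENNReal.ofReal (ε/4 * (1/2)^j) :=
          ENNReal.tsum_le_tsum fun j => le_trans (measure_mono (hsub j)) (htμ j)
      _ < ENNReal.ofReal ε := tsum_quarter hε
  · -- uniform convergence
    rw [Metric.tendstoUniformlyOn_iff]
    intro δ hδ
    obtain ⟨j, hj⟩ : ∃ j : ℕ, c j < δ/4 := by
      obtain ⟨j, hj⟩ := exists_nat_gt (4/δ)
      refine ⟨j, ?_⟩
      have h4δ : (0:ℝ) < 4/δ := by positivity
      have hjpos : (0:ℝ) < (j:ℝ)+1 := by positivity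
      rw [hc]
      rw [show δ/4 = (4/δ)⁻¹ by field_simp]
      exact inv_strictAnti₀ h4δ (by linarith)
    have hunif := htu j
    rw [Metric.tendstoUniformlyOn_iff] at hunif
    filter_upwards [hunif (δ/2) (by positivity), eventually_ge_atTop 1] with n hn hn1
    intro x hxE
    obtain ⟨hx1, hxT⟩ := hxE
    by_cases hxG : x ∈ G j
    · have hx2 : x ∈ (G j \ t j) ∪ (G j)ᶜ := Set.mem_iInter.1 hx1 j
      rcases hx2 with hx2 | hx2
      · exact lt_of_lt_of_le (hn x hx2) (by linarith)
      · exact absurd hxG hx2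
    · have hbound : ∀ m : ℕ, 1 ≤ m → |A m x| ≤ c j := by
        intro m hm
        have hnot : ¬ (c j * m < birkhoffSum τ (fun y => |h y|) m x) :=
          fun hcon => hxG ⟨m, hm, hcon⟩
        push_neg at hnot
        have hmpos : (0:ℝ) < m := by exact_mod_cast hm
        have habs : |birkhoffSum τ h m x| ≤ c j * m :=
          le_trans (abs_birkhoffSum_le τ h m x) hnot
        rw [hA]
        simp only []
        rw [abs_mul, abs_inv, abs_of_pos hmpos]
        rw [inv_mul_le_iff₀ hmpos]
        calc |birkhoffSum τ h m x| ≤ c j * m := habs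
          _ = m * c j := mul_comm _ _
      have hgb : |g x| ≤ c j := by
        have htd : Tendsto (fun n => |A n x|) atTop (𝓝 (|g x|)) := hxT.abs
        apply le_of_tendsto htd
        filter_upwards [eventually_ge_atTop 1] with m hm using hbound m hm
      have hAb : |A n x| ≤ c j := hbound n hn1
      rw [Real.dist_eq]
      calc |g x - A n x| ≤ |g x| + |A n x| := abs_sub _ _
        _ ≤ 2 * c j := by linarith
        _ < δ := by linarith




lemma avg_diff_bound (τ : α → α) {u v : α → ℝ} {L : ℝ} (hL : 0 ≤ L)
    (hb : ∀ y, |u y - v y| ≤ L) (n : ℕ) (x : α) :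
    |(n:ℝ)⁻¹ * birkhoffSum τ u n x - (n:ℝ)⁻¹ * birkhoffSum τ v n x| ≤ L := by
  match n with
  | 0 => simpa [birkhoffSum_zero] using hL
  | (m+1) =>
    have hnpos : (0:ℝ) < ((m+1:ℕ):ℝ) := by positivity
    have hsum : birkhoffSum τ u (m+1) x - birkhoffSum τ v (m+1) x
        = ∑ k ∈ range (m+1), (u (τ^[k] x) - v (τ^[k] x)) := by
      unfold birkhoffSum; rw [Finset.sum_sub_distrib]
    have habs : |birkhoffSum τ u (m+1) x - birkhoffSum τ v (m+1) x| ≤ ((m+1:ℕ):ℝ) * L := by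
      rw [hsum]
      refine le_trans (Finset.abs_sum_le_sum_abs _ _) ?_
      calc ∑ k ∈ range (m+1), |u (τ^[k] x) - v (τ^[k] x)|
          ≤ ∑ _k ∈ range (m+1), L := Finset.sum_le_sum fun k _ => hb _
        _ = ((m+1:ℕ):ℝ) * L := by simp [mul_comm]
    rw [← mul_sub, abs_mul, abs_inv, abs_of_pos hnpos, inv_mul_le_iff₀ hnpos]
    exact le_trans habs (le_of_eq (by ring))

theorem birkhoff_R0_almost_uniform' {α : Type*} [MeasurableSpace α] (μ : Measure α)
    [SigmaFinite μ] (τ : α → α) (hτ : MeasurePreserving τ μ μ)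
    (f : α → ℝ) (hf : Measurable f)
    (hR0 : ∀ l : ℝ, 0 < l → Integrable ({x | l < |f x|}.indicator f) μ) :
    ∃ g : α → ℝ, Measurable g ∧
      ∀ ε : ℝ, 0 < ε → ∃ E : Set α, MeasurableSet E ∧ μ Eᶜ < ENNReal.ofReal ε ∧
        TendstoUniformlyOn
          (fun (n : ℕ) (x : α) => (n : ℝ)⁻¹ * ∑ k ∈ Finset.range n, f (τ^[k] x))
          g atTop E := by
  classical
  set lam : ℕ → ℝ := fun m => (1/2)^m with hlam
  have hlampos : ∀ m, 0 < lam m := fun m => by positivity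
  have hlamanti : ∀ m m', m ≤ m' → lam m' ≤ lam m := fun m m' hmm' =>
    pow_le_pow_of_le_one (by norm_num) (by norm_num) hmm'
  set hh : ℕ → α → ℝ := fun m => ({x | lam m < |f x|}).indicator f with hhh
  have hSmeas : ∀ m, MeasurableSet {x | lam m < |f x|} := fun m =>
    measurableSet_lt measurable_const hf.abs
  have hhmeas : ∀ m, Measurable (hh m) := fun m => hf.indicator (hSmeas m)
  have hhint : ∀ m, Integrable (hh m) μ := fun m => hR0 (lam m) (hlampos m)
  -- pointwise bounds
  have hbm : ∀ m y, |f y - hh m y| ≤ lam m := by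
    intro m y
    by_cases hy : lam m < |f y|
    · simp [hhh, Set.indicator_of_mem, hy, (hlampos m).le]
    · push_neg at hy
      have : hh m y = 0 := Set.indicator_of_notMem (by simpa using not_lt.2 hy) _
      rw [this, sub_zero]
      exact hy
  have hdm : ∀ m m', m ≤ m' → ∀ y, |hh m y - hh m' y| ≤ lam m := by
    intro m m' hmm' y
    by_cases hy : lam m < |f y|
    · have hy' : lam m' < |f y| := lt_of_le_of_lt (hlamanti m m' hmm') hy
      have e1 : hh m y = f y := Set.indicator_of_mem (show y ∈ {x | lam m < |f x|} from hy) f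
      have e2 : hh m' y = f y :=
        Set.indicator_of_mem (show y ∈ {x | lam m' < |f x|} from hy') f
      simp [e1, e2, (hlampos m).le]
    · push_neg at hy
      have e1 : hh m y = 0 := Set.indicator_of_notMem (by simpa using not_lt.2 hy) _
      rw [e1, zero_sub, abs_neg]
      by_cases hy' : lam m' < |f y|
      · have e2 : hh m' y = f y :=
          Set.indicator_of_mem (show y ∈ {x | lam m' < |f x|} from hy') f
        rw [e2]; exact hy
      · have e2 : hh m' y = 0 := Set.indicator_of_notMem (by simpa using hy') _
        rw [e2, abs_zero]; exact (hlampos m).le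
  -- almost uniform convergence for each truncation
  have hau := fun m => almost_uniform_L1 hτ (hhmeas m) (hhint m)
  choose gm hgmmeas hP using hau
  -- the limit function
  obtain ⟨g, hgmeas, hglim⟩ := exists_measurable_limit hgmmeas
  refine ⟨g, hgmeas, ?_⟩
  intro ε hε
  have hP' := fun m => hP m (ε/4 * (1/2)^m) (by positivity)
  choose E hEmeas hEc hEu using hP'
  refine ⟨⋂ m, E m, MeasurableSet.iInter hEmeas, ?_, ?_⟩
  · calc μ (⋂ m, E m)ᶜ = μ (⋃ m, (E m)ᶜ) := by rw [Set.compl_iInter]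
      _ ≤ ∑' m, μ (E m)ᶜ := measure_iUnion_le _
      _ ≤ ∑' m, ENNReal.ofReal (ε/4 * (1/2)^m) := ENNReal.tsum_le_tsum fun m => (hEc m).le
      _ < ENNReal.ofReal ε := tsum_quarter hε
  · -- convergence facts on the intersection
    have hptm : ∀ x, x ∈ (⋂ m, E m) → ∀ m,
        Tendsto (fun n : ℕ => (n:ℝ)⁻¹ * birkhoffSum τ (hh m) n x) atTop (𝓝 (gm m x)) := by
      intro x hx m
      exact (hEu m).tendsto_at (Set.mem_iInter.1 hx m)
    have hgmdiff : ∀ x, x ∈ (⋂ m, E m) → ∀ m m', m ≤ m' → |gm m x - gm m' x| ≤ lam m := by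
      intro x hx m m' hmm'
      have h1 := hptm x hx m
      have h2 := hptm x hx m'
      have h3 : Tendsto (fun n : ℕ => |(n:ℝ)⁻¹ * birkhoffSum τ (hh m) n x
          - (n:ℝ)⁻¹ * birkhoffSum τ (hh m') n x|) atTop (𝓝 (|gm m x - gm m' x|)) :=
        (h1.sub h2).abs
      exact le_of_tendsto h3 (Filter.Eventually.of_forall fun n =>
        avg_diff_bound τ (hlampos m).le (hdm m m' hmm') n x)
    have hgmconv : ∀ x, x ∈ (⋂ m, E m) →
        Tendsto (fun m => gm m x) atTop (𝓝 (g x)) := by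
      intro x hx
      apply hglim
      have hcauchy : CauchySeq (fun m => gm m x) := by
        apply cauchySeq_of_le_geometric (1/2) 1 (by norm_num)
        intro m
        rw [Real.dist_eq, one_mul]
        exact hgmdiff x hx m (m+1) (Nat.le_succ m)
      exact cauchySeq_tendsto_of_complete hcauchy
    have hgdiff : ∀ x, x ∈ (⋂ m, E m) → ∀ m, |g x - gm m x| ≤ lam m := by
      intro x hx m
      have h1 : Tendsto (fun m' => |gm m' x - gm m x|) atTop (𝓝 (|g x - gm m x|)) :=
        ((hgmconv x hx).sub tendsto_const_nhds).abs
      apply le_of_tendsto h1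
      filter_upwards [eventually_ge_atTop m] with m' hm'
      rw [abs_sub_comm]
      exact hgmdiff x hx m m' hm'
    -- now prove uniform convergence
    have hbirk : (fun (n : ℕ) (x : α) => (n : ℝ)⁻¹ * ∑ k ∈ Finset.range n, f (τ^[k] x))
        = fun (n : ℕ) (x : α) => (n:ℝ)⁻¹ * birkhoffSum τ f n x := rfl
    rw [hbirk, Metric.tendstoUniformlyOn_iff]
    intro δ hδ
    obtain ⟨m, hm⟩ : ∃ m : ℕ, lam m < δ/4 :=
      exists_pow_lt_of_lt_one (by positivity) (by norm_num)
    have hunif := hEu m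
    rw [Metric.tendstoUniformlyOn_iff] at hunif
    filter_upwards [hunif (δ/4) (by positivity)] with n hn
    intro x hx
    have hx1 : x ∈ E m := Set.mem_iInter.1 hx m
    have d1 : |g x - gm m x| ≤ lam m := hgdiff x hx m
    have d2 : dist (gm m x) ((n:ℝ)⁻¹ * birkhoffSum τ (hh m) n x) < δ/4 := hn x hx1
    have d3 : |(n:ℝ)⁻¹ * birkhoffSum τ (hh m) n x - (n:ℝ)⁻¹ * birkhoffSum τ f n x| ≤ lam m := by
      have := avg_diff_bound τ (hlampos m).le
        (fun y => by rw [abs_sub_comm]; exact hbm m y) n x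
      exact this
    rw [Real.dist_eq] at d2 ⊢
    calc |g x - (n:ℝ)⁻¹ * birkhoffSum τ f n x|
        ≤ |g x - gm m x| + |gm m x - (n:ℝ)⁻¹ * birkhoffSum τ (hh m) n x|
          + |(n:ℝ)⁻¹ * birkhoffSum τ (hh m) n x - (n:ℝ)⁻¹ * birkhoffSum τ f n x| := by
          have := abs_sub_le (g x - gm m x) 0 0
          -- triangle inequality twice
          calc |g x - (n:ℝ)⁻¹ * birkhoffSum τ f n x|
              ≤ |g x - (n:ℝ)⁻¹ * birkhoffSum τ (hh m) n x|
                + |(n:ℝ)⁻¹ * birkhoffSum τ (hh m) n x - (n:ℝ)⁻¹ * birkhoffSum τ f n x| :=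
                abs_sub_le _ _ _
            _ ≤ |g x - gm m x| + |gm m x - (n:ℝ)⁻¹ * birkhoffSum τ (hh m) n x|
                + |(n:ℝ)⁻¹ * birkhoffSum τ (hh m) n x - (n:ℝ)⁻¹ * birkhoffSum τ f n x| := by
                have := abs_sub_le (g x) (gm m x) ((n:ℝ)⁻¹ * birkhoffSum τ (hh m) n x)
                linarith
      _ < δ := by linarith


end BirkhoffAux

/-- Almost uniform convergence of Birkhoff averages for `f ∈ R₀ = (L₁ + L∞)₀`. -/
theorem birkhoff_R0_almost_uniform {α : Type*} [MeasurableSpace α] (μ : Measure α)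
    [SigmaFinite μ] (τ : α → α) (hτ : MeasurePreserving τ μ μ)
    (f : α → ℝ) (hf : Measurable f)
    (hR0 : ∀ l : ℝ, 0 < l → Integrable ({x | l < |f x|}.indicator f) μ) :
    ∃ g : α → ℝ, Measurable g ∧
      ∀ ε : ℝ, 0 < ε → ∃ E : Set α, MeasurableSet E ∧ μ Eᶜ < ENNReal.ofReal ε ∧
        TendstoUniformlyOn
          (fun (n : ℕ) (x : α) => (n : ℝ)⁻¹ * ∑ k ∈ Finset.range n, f (τ^[k] x))
          g atTop E :=
  birkhoff_R0_almost_uniform' μ τ hτ f hf hR0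
end

section
/- Let (α, μ) be a σ-finite measure space and let T be a Dunford–Schwartz operator on L₁(μ): a linear map T : L₁(μ) → L₁(μ) such that 0 ≤ f implies 0 ≤ Tf, ‖Tf‖₁ ≤ ‖f‖₁ for all f ∈ L₁(μ), and ‖Tf‖_∞ ≤ ‖f‖_∞ for all f ∈ L₁(μ) ∩ L∞(μ). Then for every f ∈ L₁(μ) with f ≥ 0 and every ε > 0 there exists a measurable set E ⊆ α with μ(α \ E) ≤ ‖f‖₁ / ε such that for every n ≥ 1, Sₙ(T)f ≤ ε μ-a.e. on E, where Sₙ(T)f = (1/n)·∑_{k=0}^{n-1} T^k f. -/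
open MeasureTheory Filter Finset ENNReal

section aux

variable {α : Type*} [MeasurableSpace α] {μ : Measure α}

lemma lp_coe_sm (f : Lp ℝ 1 μ) : StronglyMeasurable (f : α → ℝ) :=
  AEEqFun.stronglyMeasurable _

lemma lp_coeFn_sum {ι : Type*} (s : Finset ι) (g : ι → Lp ℝ 1 μ) :
    ⇑(∑ i ∈ s, g i) =ᵐ[μ] fun x => ∑ i ∈ s, g i x := by
  classical
  induction s using Finset.cons_induction with
  | empty => simp only [Finset.sum_empty]; exact Lp.coeFn_zero ℝ 1 μ
  | cons a s ha ih =>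
    simp_rw [Finset.sum_cons]
    filter_upwards [Lp.coeFn_add (g a) (∑ i ∈ s, g i), ih] with x h1 h2
    rw [h1, Pi.add_apply, h2]

lemma T_mono (T : Lp ℝ 1 μ →ₗ[ℝ] Lp ℝ 1 μ)
    (hpos : ∀ f : Lp ℝ 1 μ, 0 ≤ f → 0 ≤ T f) {a b : Lp ℝ 1 μ} (hab : a ≤ b) :
    T a ≤ T b := by
  have h := hpos (b - a) (by simpa using sub_nonneg.mpr hab)
  rw [map_sub] at h
  exact sub_nonneg.mp h

end aux

section hopf

variable {α : Type*} [MeasurableSpace α] {μ : Measure α}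

lemma hopf_lemma (T : Lp ℝ 1 μ →ₗ[ℝ] Lp ℝ 1 μ)
    (hpos : ∀ f : Lp ℝ 1 μ, 0 ≤ f → 0 ≤ T f)
    (hL1 : ∀ f : Lp ℝ 1 μ, ‖T f‖ ≤ ‖f‖) (g : Lp ℝ 1 μ) (N : ℕ) :
    ∃ E : Set α, MeasurableSet E ∧
      (∀ n, 1 ≤ n → n ≤ N + 1 →
        ∀ᵐ x ∂μ, 0 < ((∑ k ∈ Finset.range n, (T ^ k) g : Lp ℝ 1 μ) : α → ℝ) x → x ∈ E) ∧
      0 ≤ ∫ x in E, (g : α → ℝ) x ∂μ := by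
  classical
  set P : ℕ → Lp ℝ 1 μ := fun n => ∑ k ∈ Finset.range n, (T ^ k) g with hP
  have hne : (Finset.range (N + 1)).Nonempty := ⟨0, by simp⟩
  set M : Lp ℝ 1 μ := (Finset.range (N + 1)).sup' hne (fun i => P (i + 1)) with hM
  set h : Lp ℝ 1 μ := M ⊔ 0 with hh
  have hle : ∀ n, 1 ≤ n → n ≤ N + 1 → P n ≤ M := by
    intro n h1 h2
    have hmem : n - 1 ∈ Finset.range (N + 1) := by
      simp only [Finset.mem_range]; omega
    have := Finset.le_sup' (fun i => P (i + 1)) hmem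
    simpa [Nat.sub_add_cancel h1] using this
  have hh0 : (0 : Lp ℝ 1 μ) ≤ h := le_sup_right
  have hTh0 : 0 ≤ T h := hpos _ hh0
  have hpowsucc : ∀ (k : ℕ) (v : Lp ℝ 1 μ), (T ^ (k + 1)) v = T ((T ^ k) v) := by
    intro k v; rw [pow_succ', Module.End.mul_apply]
  have hP1 : P 1 = g := by simp [hP]
  have hPsucc : ∀ n, P (n + 1) = g + T (P n) := by
    intro n
    simp only [hP]
    rw [Finset.sum_range_succ', map_sum]
    simp only [hpowsucc, pow_zero, Module.End.one_apply]
    rw [add_comm]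
  have hMle : M ≤ g + T h := by
    apply Finset.sup'_le
    intro i hi
    rcases i with _ | m
    · rw [zero_add, hP1]
      exact le_add_of_nonneg_right hTh0
    · rw [hPsucc]
      have h1 : P (m + 1) ≤ h := by
        refine le_trans (hle (m + 1) (by omega) ?_) le_sup_left
        simp only [Finset.mem_range] at hi; omega
      exact add_le_add le_rfl (T_mono T hpos h1)
  set E : Set α := {x | 0 < (M : α → ℝ) x} with hE
  have hEmeas : MeasurableSet E :=
    measurableSet_lt measurable_const (lp_coe_sm M).measurable
  refine ⟨E, hEmeas, ?_, ?_⟩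
  · intro n h1 h2
    have := (Lp.coeFn_le _ _).mpr (hle n h1 h2)
    filter_upwards [this] with x hx hlt
    exact lt_of_lt_of_le hlt hx
  · -- integral part
    have hint_g : Integrable (g : α → ℝ) μ := L1.integrable_coeFn g
    have hint_M : Integrable (M : α → ℝ) μ := L1.integrable_coeFn M
    have hint_h : Integrable (h : α → ℝ) μ := L1.integrable_coeFn h
    have hint_Th : Integrable (T h : α → ℝ) μ := L1.integrable_coeFn (T h)
    have hae_Mle : (M : α → ℝ) ≤ᵐ[μ] fun x => (g : α → ℝ) x + (T h : α → ℝ) x := by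
      filter_upwards [(Lp.coeFn_le _ _).mpr hMle, Lp.coeFn_add g (T h)] with x h1 h2
      calc (M : α → ℝ) x ≤ ((g + T h : Lp ℝ 1 μ) : α → ℝ) x := h1
        _ = (g : α → ℝ) x + (T h : α → ℝ) x := by rw [h2]; rfl
    have hae_h : (h : α → ℝ) =ᵐ[μ] fun x => max ((M : α → ℝ) x) 0 := by
      filter_upwards [Lp.coeFn_sup M 0, Lp.coeFn_zero ℝ 1 μ] with x h1 h2
      rw [show ((h : Lp ℝ 1 μ) : α → ℝ) = ((M ⊔ 0 : Lp ℝ 1 μ) : α → ℝ) from rfl, h1,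
        Pi.sup_apply, h2]
      rfl
    have hae_Th0 : 0 ≤ᵐ[μ] (T h : α → ℝ) := (Lp.coeFn_nonneg _).mpr hTh0
    have hae_h0 : 0 ≤ᵐ[μ] (h : α → ℝ) := (Lp.coeFn_nonneg _).mpr hh0
    have key1 : ∫ x in E, (M : α → ℝ) x ∂μ ≤
        ∫ x in E, ((g : α → ℝ) x + (T h : α → ℝ) x) ∂μ :=
      integral_mono_ae hint_M.restrict (hint_g.restrict.add hint_Th.restrict)
        (ae_restrict_of_ae hae_Mle)
    have key1' : ∫ x in E, ((g : α → ℝ) x + (T h : α → ℝ) x) ∂μ =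
        ∫ x in E, (g : α → ℝ) x ∂μ + ∫ x in E, (T h : α → ℝ) x ∂μ :=
      integral_add hint_g.restrict hint_Th.restrict
    have key2 : ∫ x in E, (M : α → ℝ) x ∂μ = ∫ x in E, (h : α → ℝ) x ∂μ := by
      apply setIntegral_congr_ae hEmeas
      filter_upwards [hae_h] with x hx hxE
      rw [hx, max_eq_left (le_of_lt hxE)]
    have key3c : ∫ x in Eᶜ, (h : α → ℝ) x ∂μ = 0 := by
      apply integral_eq_zero_of_ae
      rw [EventuallyEq, ae_restrict_iff' hEmeas.compl]
      filter_upwards [hae_h] with x hx hxE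
      have : ¬ 0 < (M : α → ℝ) x := hxE
      rw [hx]
      simp [max_eq_right (le_of_not_gt this)]
    have key3 : ∫ x in E, (h : α → ℝ) x ∂μ = ∫ x, (h : α → ℝ) x ∂μ := by
      have := integral_add_compl hEmeas hint_h
      rw [key3c, add_zero] at this
      exact this
    have key4 : ∫ x in E, (T h : α → ℝ) x ∂μ ≤ ∫ x, (T h : α → ℝ) x ∂μ :=
      setIntegral_le_integral hint_Th hae_Th0
    have key5 : ∫ x, (T h : α → ℝ) x ∂μ ≤ ‖T h‖ := by
      rw [L1.norm_eq_integral_norm]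
      exact integral_mono hint_Th hint_Th.norm (fun x => le_abs_self _)
    have key7 : ‖h‖ = ∫ x, (h : α → ℝ) x ∂μ := by
      rw [L1.norm_eq_integral_norm]
      apply integral_congr_ae
      filter_upwards [hae_h0] with x hx
      exact Real.norm_of_nonneg hx
    have key6 : ‖T h‖ ≤ ‖h‖ := hL1 h
    have := key1
    rw [key1', key2, key3] at this
    linarith

end hopf

/-- Commutative form of Yeadon's maximal ergodic inequality: for a Dunford–Schwartz
operator `T` and `0 ≤ f ∈ L₁`, for every `ε > 0` there is a set `E` with
`μ(Eᶜ) ≤ ‖f‖₁ / ε` on which all the Cesàro averages `Sₙ(T)f` are `≤ ε` a.e. -/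

theorem dunfordSchwartz_maximal_inequality {α : Type*} [MeasurableSpace α] (μ : Measure α)
    [SigmaFinite μ] (T : Lp ℝ 1 μ →ₗ[ℝ] Lp ℝ 1 μ)
    (hpos : ∀ f : Lp ℝ 1 μ, 0 ≤ f → 0 ≤ T f)
    (hL1 : ∀ f : Lp ℝ 1 μ, ‖T f‖ ≤ ‖f‖)
    (hLinf : ∀ f : Lp ℝ 1 μ, MemLp (f : α → ℝ) ⊤ μ →
      eLpNorm (T f : α → ℝ) ⊤ μ ≤ eLpNorm (f : α → ℝ) ⊤ μ)
    (f : Lp ℝ 1 μ) (hf : 0 ≤ f) (ε : ℝ) (hε : 0 < ε) :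
    ∃ E : Set α, MeasurableSet E ∧ μ Eᶜ ≤ ENNReal.ofReal (‖f‖ / ε) ∧
      ∀ n : ℕ, 1 ≤ n →
        ∀ᵐ x ∂μ, x ∈ E →
          (((n : ℝ)⁻¹ • ∑ k ∈ Finset.range n, (T ^ k) f : Lp ℝ 1 μ) : α → ℝ) x ≤ ε := by
  classical
  set Pf : ℕ → Lp ℝ 1 μ := fun n => ∑ k ∈ Finset.range n, (T ^ k) f with hPf
  set B : ℕ → Set α := fun n => {x | (n : ℝ) * ε < (Pf n : α → ℝ) x} with hB
  have hBmeas : ∀ n, MeasurableSet (B n) :=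
    fun n => measurableSet_lt measurable_const (lp_coe_sm (Pf n)).measurable
  have hBfin : ∀ n, 1 ≤ n → μ (B n) < ⊤ := by
    intro n hn
    have hpos' : 0 < (n : ℝ) * ε := by positivity
    have h1 : μ {x | (n : ℝ) * ε ≤ (Pf n : α → ℝ) x} < ⊤ :=
      (L1.integrable_coeFn (Pf n)).measure_ge_lt_top hpos'
    refine lt_of_le_of_lt (measure_mono ?_) h1
    intro x hx
    exact le_of_lt (show (n : ℝ) * ε < (Pf n : α → ℝ) x from hx)
  set A : ℕ → Set α := fun N => ⋃ n ∈ Finset.Icc 1 N, B n with hA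
  have hAmeas : ∀ N, MeasurableSet (A N) :=
    fun N => MeasurableSet.biUnion (Set.to_countable _) (fun n _ => hBmeas n)
  have hAfin : ∀ N, μ (A N) < ⊤ := by
    intro N
    refine measure_biUnion_lt_top (Finset.Icc 1 N).finite_toSet (fun n hn => ?_)
    exact hBfin n (Finset.mem_Icc.mp hn).1
  -- key bound
  have hfnorm : ∫ x, (f : α → ℝ) x ∂μ = ‖f‖ := by
    rw [L1.norm_eq_integral_norm]
    apply integral_congr_ae
    filter_upwards [(Lp.coeFn_nonneg f).mpr hf] with x hx
    exact (Real.norm_of_nonneg hx).symm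
  have hkey : ∀ N, μ (A N) ≤ ENNReal.ofReal (‖f‖ / ε) := by
    intro N
    set u : Lp ℝ 1 μ := indicatorConstLp 1 (hAmeas N) (hAfin N).ne (1 : ℝ) with hu
    have hu0 : 0 ≤ u := by
      rw [← Lp.coeFn_nonneg]
      filter_upwards [indicatorConstLp_coeFn (p := 1) (hs := hAmeas N) (hμs := (hAfin N).ne)
        (c := (1 : ℝ))] with x hx
      rw [hx]
      exact Set.indicator_nonneg (fun _ _ => zero_le_one) x
    have hu_top : eLpNorm (u : α → ℝ) ⊤ μ ≤ 1 := by
      rw [eLpNorm_congr_ae (indicatorConstLp_coeFn (p := 1)), eLpNorm_exponent_top]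
      refine le_trans (eLpNormEssSup_indicator_const_le _ _) ?_
      simp
    -- properties of iterates of u
    have hiter : ∀ k : ℕ, 0 ≤ (T ^ k) u ∧ eLpNorm (((T ^ k) u : Lp ℝ 1 μ) : α → ℝ) ⊤ μ ≤ 1 := by
      intro k
      induction k with
      | zero => exact ⟨by simpa using hu0, by simpa using hu_top⟩
      | succ k ih =>
        have hmem : MemLp (((T ^ k) u : Lp ℝ 1 μ) : α → ℝ) ⊤ μ :=
          ⟨Lp.aestronglyMeasurable _, lt_of_le_of_lt ih.2 one_lt_top⟩
        have hsucc : (T ^ (k + 1)) u = T ((T ^ k) u) := by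
          rw [pow_succ', Module.End.mul_apply]
        constructor
        · rw [hsucc]; exact hpos _ ih.1
        · rw [hsucc]; exact le_trans (hLinf _ hmem) ih.2
    have hiter_ae : ∀ k : ℕ, ∀ᵐ x ∂μ, (((T ^ k) u : Lp ℝ 1 μ) : α → ℝ) x ≤ 1 := by
      intro k
      have h1 : ∀ᵐ x ∂μ, (‖(((T ^ k) u : Lp ℝ 1 μ) : α → ℝ) x‖₊ : ℝ≥0∞) ≤
          eLpNormEssSup (((T ^ k) u : Lp ℝ 1 μ) : α → ℝ) μ := ae_le_eLpNormEssSup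
      have h2 := (hiter k).2
      rw [eLpNorm_exponent_top] at h2
      filter_upwards [h1] with x hx
      have : (‖(((T ^ k) u : Lp ℝ 1 μ) : α → ℝ) x‖₊ : ℝ≥0∞) ≤ 1 := le_trans hx h2
      have hn : ‖(((T ^ k) u : Lp ℝ 1 μ) : α → ℝ) x‖ ≤ 1 := by
        have := ENNReal.coe_le_one_iff.mp this
        exact_mod_cast this
      exact le_trans (le_abs_self _) hn
    set Pu : ℕ → Lp ℝ 1 μ := fun n => ∑ k ∈ Finset.range n, (T ^ k) u with hPu
    have hPu_ae : ∀ n : ℕ, ∀ᵐ x ∂μ, ((Pu n : Lp ℝ 1 μ) : α → ℝ) x ≤ (n : ℝ) := by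
      intro n
      have hall : ∀ᵐ x ∂μ, ∀ k : ℕ, (((T ^ k) u : Lp ℝ 1 μ) : α → ℝ) x ≤ 1 :=
        ae_all_iff.mpr hiter_ae
      filter_upwards [hall, lp_coeFn_sum (Finset.range n) (fun k => (T ^ k) u)] with x hx hsum
      rw [hPu]
      simp only
      rw [hsum]
      calc ∑ k ∈ Finset.range n, (((T ^ k) u : Lp ℝ 1 μ) : α → ℝ) x
          ≤ ∑ k ∈ Finset.range n, (1 : ℝ) := Finset.sum_le_sum (fun k _ => hx k)
        _ = (n : ℝ) := by simp
    set g : Lp ℝ 1 μ := f - ε • u with hg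
    have hPg : ∀ n : ℕ, (∑ k ∈ Finset.range n, (T ^ k) g : Lp ℝ 1 μ) = Pf n - ε • Pu n := by
      intro n
      rw [hPf, hPu]
      simp only [hg]
      rw [Finset.smul_sum, ← Finset.sum_sub_distrib]
      refine Finset.sum_congr rfl (fun k _ => ?_)
      rw [map_sub, LinearMap.map_smul]
    obtain ⟨E, hEmeas, hEincl, hEint⟩ := hopf_lemma T hpos hL1 g N
    -- a.e. inclusion of A N in E
    have hincl : ∀ᵐ x ∂μ, x ∈ A N → x ∈ E := by
      have Hn : ∀ n : ℕ, ∀ᵐ x ∂μ, n ∈ Finset.Icc 1 N → (x ∈ B n → x ∈ E) := by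
        intro n
        by_cases hn : n ∈ Finset.Icc 1 N
        · obtain ⟨hn1, hn2⟩ := Finset.mem_Icc.mp hn
          have h1 := hEincl n hn1 (le_trans hn2 (Nat.le_succ N))
          have h2 : (((∑ k ∈ Finset.range n, (T ^ k) g : Lp ℝ 1 μ)) : α → ℝ) =ᵐ[μ]
              fun x => (Pf n : α → ℝ) x - ε * ((Pu n : Lp ℝ 1 μ) : α → ℝ) x := by
            rw [hPg n]
            filter_upwards [Lp.coeFn_sub (Pf n) (ε • Pu n), Lp.coeFn_smul ε (Pu n)] with x hx hx2
            rw [hx, Pi.sub_apply, hx2]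
            rfl
          filter_upwards [h1, h2, hPu_ae n] with x hx1 hx2 hx3 _ hxB
          apply hx1
          rw [hx2]
          have hxB' : (n : ℝ) * ε < (Pf n : α → ℝ) x := hxB
          nlinarith
        · filter_upwards with x hx
          exact absurd hx hn
      have H := ae_all_iff.mpr Hn
      filter_upwards [H] with x hx hxA
      rw [hA] at hxA
      simp only [Set.mem_iUnion] at hxA
      obtain ⟨n, hn, hxB⟩ := hxA
      exact hx n hn hxB
    have hdiff : μ (A N \ E) = 0 := by
      have h0 := ae_iff.mp hincl
      rw [← h0]
      congr 1
      ext x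
      simp [Set.mem_diff, Classical.not_imp]
    have hinter : μ (A N ∩ E) = μ (A N) := by
      have := measure_inter_add_diff (μ := μ) (A N) hEmeas
      rw [hdiff, add_zero] at this
      exact this
    -- compute set integral of u on E
    have hint_u : Integrable (u : α → ℝ) μ := L1.integrable_coeFn u
    have hint_f : Integrable (f : α → ℝ) μ := L1.integrable_coeFn f
    have hu_int : ∫ x in E, (u : α → ℝ) x ∂μ = (μ (A N)).toReal := by
      calc ∫ x in E, (u : α → ℝ) x ∂μ
          = ∫ x in E, (A N).indicator (fun _ => (1 : ℝ)) x ∂μ := by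
            apply integral_congr_ae
            exact ae_restrict_of_ae (indicatorConstLp_coeFn (p := 1))
        _ = ∫ x in E ∩ A N, (1 : ℝ) ∂μ := setIntegral_indicator (hAmeas N)
        _ = (μ (E ∩ A N)).toReal := by rw [setIntegral_const]; simp [Measure.real]
        _ = (μ (A N)).toReal := by rw [Set.inter_comm, hinter]
    have hg_int : ∫ x in E, (g : α → ℝ) x ∂μ =
        ∫ x in E, (f : α → ℝ) x ∂μ - ε * (μ (A N)).toReal := by
      calc ∫ x in E, (g : α → ℝ) x ∂μ
          = ∫ x in E, ((f : α → ℝ) x - ε * (u : α → ℝ) x) ∂μ := by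
            apply integral_congr_ae
            apply ae_restrict_of_ae
            filter_upwards [Lp.coeFn_sub f (ε • u), Lp.coeFn_smul ε u] with x hx hx2
            rw [hg]
            calc ((f - ε • u : Lp ℝ 1 μ) : α → ℝ) x
                = (f : α → ℝ) x - ((ε • u : Lp ℝ 1 μ) : α → ℝ) x := by rw [hx]; rfl
              _ = (f : α → ℝ) x - ε * (u : α → ℝ) x := by rw [hx2]; rfl
        _ = ∫ x in E, (f : α → ℝ) x ∂μ - ∫ x in E, ε * (u : α → ℝ) x ∂μ :=
            integral_sub hint_f.restrict (hint_u.restrict.const_mul ε)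
        _ = ∫ x in E, (f : α → ℝ) x ∂μ - ε * (μ (A N)).toReal := by
            rw [integral_const_mul, hu_int]
    have hfE : ∫ x in E, (f : α → ℝ) x ∂μ ≤ ‖f‖ := by
      rw [← hfnorm]
      exact setIntegral_le_integral hint_f ((Lp.coeFn_nonneg f).mpr hf)
    have htoReal : (μ (A N)).toReal ≤ ‖f‖ / ε := by
      rw [hg_int] at hEint
      rw [le_div_iff₀ hε]
      nlinarith
    calc μ (A N) = ENNReal.ofReal ((μ (A N)).toReal) := (ENNReal.ofReal_toReal (hAfin N).ne).symm
      _ ≤ ENNReal.ofReal (‖f‖ / ε) := ENNReal.ofReal_le_ofReal htoReal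
  -- assemble
  refine ⟨(⋃ N, A N)ᶜ, (MeasurableSet.iUnion (fun N => hAmeas N)).compl, ?_, ?_⟩
  · rw [compl_compl]
    have hmono : Monotone A := by
      intro i j hij x hx
      simp only [hA, Set.mem_iUnion] at hx ⊢
      obtain ⟨n, hn, hxB⟩ := hx
      obtain ⟨hn1, hn2⟩ := Finset.mem_Icc.mp hn
      exact ⟨n, Finset.mem_Icc.mpr ⟨hn1, le_trans hn2 hij⟩, hxB⟩
    rw [hmono.directed_le.measure_iUnion]
    exact iSup_le hkey
  · intro n hn
    filter_upwards [Lp.coeFn_smul ((n : ℝ)⁻¹) (Pf n)] with x hx hxE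
    have hx' : (((n : ℝ)⁻¹ • Pf n : Lp ℝ 1 μ) : α → ℝ) x = (n : ℝ)⁻¹ * (Pf n : α → ℝ) x := by
      rw [hx]; rfl
    rw [hx']
    have hxB : x ∉ B n := by
      intro hxB
      apply hxE
      exact Set.mem_iUnion.mpr ⟨n, Set.mem_biUnion (Finset.mem_Icc.mpr ⟨hn, le_refl n⟩) hxB⟩
    have hle : (Pf n : α → ℝ) x ≤ (n : ℝ) * ε := le_of_not_gt hxB
    have hnpos : (0 : ℝ) < (n : ℝ) := by exact_mod_cast hn
    rw [inv_mul_le_iff₀ hnpos]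
    linarith
end

section
/- There exist a σ-finite measure space (α, μ) with μ(α) = ∞, an invertible measure-preserving transformation τ : α → α that is ergodic with respect to μ, and a bounded measurable function f : α → ℝ such that the set of points x ∈ α at which the Birkhoff averages (1/n)·∑_{k=0}^{n-1} f(τ^k x) fail to converge has positive μ-measure. -/
open MeasureTheory Filter Finset ENNReal

/-- Block function: 1 on dyadic blocks `[2^(2m), 2^(2m+1))`, 0 on the others. -/
noncomputable def gfun : ℕ → ℝ := fun n => if Nat.log 2 n % 2 = 0 then 1 else 0

lemma gfun_eq_one {m n : ℕ} (h1 : 4 ^ m ≤ n) (h2 : n < 2 * 4 ^ m) : gfun n = 1 := by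
  have hlog : Nat.log 2 n = 2 * m := by
    apply Nat.log_eq_of_pow_le_of_lt_pow
    · calc (2:ℕ) ^ (2 * m) = 4 ^ m := by rw [pow_mul]; norm_num
      _ ≤ n := h1
    · calc n < 2 * 4 ^ m := h2
      _ = 2 ^ (2 * m + 1) := by rw [pow_succ, pow_mul]; ring_nf
  simp [gfun, hlog, Nat.mul_mod_right]

lemma gfun_eq_zero {m n : ℕ} (h1 : 2 * 4 ^ m ≤ n) (h2 : n < 4 ^ (m + 1)) : gfun n = 0 := by
  have hlog : Nat.log 2 n = 2 * m + 1 := by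
    apply Nat.log_eq_of_pow_le_of_lt_pow
    · calc (2:ℕ) ^ (2 * m + 1) = 2 * 4 ^ m := by rw [pow_succ, pow_mul]; ring_nf
      _ ≤ n := h1
    · calc n < 4 ^ (m + 1) := h2
      _ = 2 ^ (2 * m + 1 + 1) := by
        rw [show 2 * m + 1 + 1 = 2 * (m + 1) by ring, pow_mul]; norm_num
  simp only [gfun, hlog]
  rw [if_neg (by omega)]

lemma gfun_sums (m : ℕ) :
    (∑ k ∈ Finset.range (4 ^ m), gfun k) = ((4:ℝ) ^ m + 2) / 3 ∧
    (∑ k ∈ Finset.range (2 * 4 ^ m), gfun k) = (4 * (4:ℝ) ^ m + 2) / 3 := by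
  induction m with
  | zero =>
      have h0 : gfun 0 = 1 := by simp [gfun]
      have h1 : gfun 1 = 1 := by simp [gfun]
      constructor
      · rw [pow_zero, Finset.sum_range_one, h0]; norm_num
      · rw [show 2 * 4 ^ 0 = 2 by norm_num, Finset.sum_range_succ, Finset.sum_range_one, h0, h1]
        norm_num
  | succ m ih =>
      have hle1 : 2 * 4 ^ m ≤ 4 ^ (m + 1) := by rw [pow_succ]; omega
      have hfirst : (∑ k ∈ Finset.range (4 ^ (m + 1)), gfun k)
          = ((4:ℝ) ^ (m + 1) + 2) / 3 := by
        have hsplit := Finset.sum_Ico_consecutive gfun (Nat.zero_le (2 * 4 ^ m)) hle1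
        rw [Finset.range_eq_Ico, ← hsplit, ← Finset.range_eq_Ico]
        have hzero : (∑ k ∈ Finset.Ico (2 * 4 ^ m) (4 ^ (m + 1)), gfun k) = 0 := by
          apply Finset.sum_eq_zero
          intro x hx
          rw [Finset.mem_Ico] at hx
          exact gfun_eq_zero hx.1 hx.2
        rw [hzero, add_zero, ih.2, pow_succ]
        ring
      refine ⟨hfirst, ?_⟩
      have hle2 : 4 ^ (m + 1) ≤ 2 * 4 ^ (m + 1) := by omega
      have hsplit := Finset.sum_Ico_consecutive gfun (Nat.zero_le (4 ^ (m + 1))) hle2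
      rw [Finset.range_eq_Ico, ← hsplit, ← Finset.range_eq_Ico]
      have hone : (∑ k ∈ Finset.Ico (4 ^ (m + 1)) (2 * 4 ^ (m + 1)), gfun k)
          = (4:ℝ) ^ (m + 1) := by
        rw [Finset.sum_eq_card_nsmul (fun x hx => by
          rw [Finset.mem_Ico] at hx; exact gfun_eq_one hx.1 hx.2)]
        rw [Nat.card_Ico, show 2 * 4 ^ (m + 1) - 4 ^ (m + 1) = 4 ^ (m + 1) from by omega]
        push_cast
        ring
      rw [hone, hfirst, pow_succ]
      ring

lemma gfun_avg_diverges :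
    ¬ ∃ L : ℝ, Tendsto (fun n : ℕ => (n : ℝ)⁻¹ * ∑ k ∈ Finset.range n, gfun k)
      atTop (nhds L) := by
  rintro ⟨L, hL⟩
  set a : ℕ → ℝ := fun n => (n : ℝ)⁻¹ * ∑ k ∈ Finset.range n, gfun k with ha
  have hpow : Tendsto (fun m : ℕ => (4:ℕ) ^ m) atTop atTop :=
    tendsto_atTop_mono (fun m => (Nat.lt_pow_self (n := m) (a := 4) (by norm_num)).le) tendsto_id
  have hpow2 : Tendsto (fun m : ℕ => 2 * (4:ℕ) ^ m) atTop atTop :=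
    tendsto_atTop_mono (fun m => Nat.le_mul_of_pos_left _ (by norm_num)) hpow
  have hq : Tendsto (fun m : ℕ => ((1:ℝ)/4) ^ m) atTop (nhds 0) := by
    apply _root_.tendsto_pow_atTop_nhds_zero_of_lt_one <;> norm_num
  have h4ne : ∀ m : ℕ, ((4:ℝ) ^ m) ≠ 0 := fun m => by positivity
  -- limit along 4^m is 1/3
  have e1 : ∀ m : ℕ, a (4 ^ m) = 1/3 + (2/3) * ((1:ℝ)/4) ^ m := by
    intro m
    have hc : (((4:ℕ) ^ m : ℕ) : ℝ) = (4:ℝ) ^ m := by push_cast; ring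
    simp only [ha, (gfun_sums m).1, hc]
    have h : ((4:ℝ)^m) ≠ 0 := h4ne m
    rw [div_pow, one_pow, one_div,
      show ((4:ℝ)^m)⁻¹ * (((4:ℝ)^m + 2) / 3)
        = ((4:ℝ)^m * ((4:ℝ)^m)⁻¹)/3 + (2/3) * ((4:ℝ)^m)⁻¹ from by ring,
      mul_inv_cancel₀ h]
    norm_num
  have e2 : ∀ m : ℕ, a (2 * 4 ^ m) = 2/3 + (1/3) * ((1:ℝ)/4) ^ m := by
    intro m
    have hc : ((2 * (4:ℕ) ^ m : ℕ) : ℝ) = 2 * (4:ℝ) ^ m := by push_cast; ring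
    simp only [ha, (gfun_sums m).2, hc]
    have h : ((4:ℝ)^m) ≠ 0 := h4ne m
    rw [div_pow, one_pow]
    field_simp
    ring
  have t1 : Tendsto (fun m : ℕ => a (4 ^ m)) atTop (nhds L) := hL.comp hpow
  have t2 : Tendsto (fun m : ℕ => a (2 * 4 ^ m)) atTop (nhds L) := hL.comp hpow2
  have t1' : Tendsto (fun m : ℕ => a (4 ^ m)) atTop (nhds (1/3)) := by
    simp only [e1]
    have := (tendsto_const_nhds (x := (1/3:ℝ)) (f := atTop (α := ℕ))).add
      ((hq.const_mul (2/3)))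
    simpa using this
  have t2' : Tendsto (fun m : ℕ => a (2 * 4 ^ m)) atTop (nhds (2/3)) := by
    simp only [e2]
    have := (tendsto_const_nhds (x := (2/3:ℝ)) (f := atTop (α := ℕ))).add
      ((hq.const_mul (1/3)))
    simpa using this
  have hL1 : L = 1/3 := tendsto_nhds_unique t1 t1'
  have hL2 : L = 2/3 := tendsto_nhds_unique t2 t2'
  rw [hL1] at hL2
  norm_num at hL2

/-- On some infinite σ-finite measure space there is an invertible ergodic
measure-preserving transformation and a bounded measurable function whose Birkhoff
averages fail to converge on a set of positive measure. -/
theorem exists_ergodic_bounded_birkhoff_diverges :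
    ∃ (α : Type) (m : MeasurableSpace α) (μ : Measure α),
      SigmaFinite μ ∧ μ Set.univ = ⊤ ∧
      ∃ e : α ≃ α, MeasurePreserving e μ μ ∧ MeasurePreserving e.symm μ μ ∧
        Ergodic e μ ∧
        ∃ f : α → ℝ, Measurable f ∧ (∃ C : ℝ, ∀ x, |f x| ≤ C) ∧
          0 < μ {x | ¬ ∃ L : ℝ,
            Tendsto (fun n : ℕ => (n : ℝ)⁻¹ * ∑ k ∈ Finset.range n, f ((⇑e)^[k] x))
              atTop (nhds L)} := by
  refine ⟨ℤ, inferInstance, Measure.count, ?_, ?_, Equiv.addRight (1:ℤ), ?_, ?_, ?_, ?_⟩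
  · -- σ-finite
    apply Measure.sigmaFinite_of_countable (S := Set.range (fun z : ℤ => ({z} : Set ℤ)))
      (Set.countable_range _)
    · rintro s ⟨z, rfl⟩
      simp [Measure.count_singleton]
    · ext x
      simp
  · exact Measure.count_apply_infinite Set.infinite_univ
  · -- measure preserving
    refine ⟨measurable_of_countable _, ?_⟩
    ext s hs
    rw [Measure.map_apply (measurable_of_countable _) hs]
    have hpre : ⇑(Equiv.addRight (1:ℤ)) ⁻¹' s = ⇑(Equiv.addRight (1:ℤ)).symm '' s := by
      ext x
      constructor
      · intro hx
        exact ⟨_, hx, Equiv.symm_apply_apply _ _⟩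
      · rintro ⟨y, hy, rfl⟩
        simpa [Set.mem_preimage, Equiv.apply_symm_apply] using hy
    rw [hpre, Measure.count_injective_image (Equiv.injective _)]
  · -- inverse measure preserving
    refine ⟨measurable_of_countable _, ?_⟩
    ext s hs
    rw [Measure.map_apply (measurable_of_countable _) hs]
    have hpre : ⇑(Equiv.addRight (1:ℤ)).symm ⁻¹' s = ⇑(Equiv.addRight (1:ℤ)) '' s := by
      ext x
      constructor
      · intro hx
        exact ⟨_, hx, Equiv.apply_symm_apply _ _⟩
      · rintro ⟨y, hy, rfl⟩
        simpa [Set.mem_preimage, Equiv.symm_apply_apply] using hy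
    rw [hpre, Measure.count_injective_image (Equiv.injective _)]
  · -- ergodic
    refine ⟨?_, ⟨fun s hs hinv => ?_⟩⟩
    · refine ⟨measurable_of_countable _, ?_⟩
      ext s hs
      rw [Measure.map_apply (measurable_of_countable _) hs]
      have hpre : ⇑(Equiv.addRight (1:ℤ)) ⁻¹' s = ⇑(Equiv.addRight (1:ℤ)).symm '' s := by
        ext x
        constructor
        · intro hx
          exact ⟨_, hx, Equiv.symm_apply_apply _ _⟩
        · rintro ⟨y, hy, rfl⟩
          simpa [Set.mem_preimage, Equiv.apply_symm_apply] using hy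
      rw [hpre, Measure.count_injective_image (Equiv.injective _)]
    · rw [Filter.eventuallyConst_set']
      have hstep : ∀ x : ℤ, x ∈ s ↔ x + 1 ∈ s := by
        intro x
        constructor
        · intro hx
          have hx' : x ∈ ⇑(Equiv.addRight (1:ℤ)) ⁻¹' s := by rw [hinv]; exact hx
          simpa [Set.mem_preimage, Equiv.coe_addRight] using hx'
        · intro hx
          have : x ∈ ⇑(Equiv.addRight (1:ℤ)) ⁻¹' s := by
            simpa [Set.mem_preimage, Equiv.coe_addRight] using hx
          rwa [hinv] at this
      by_cases h : s = ∅
      · left; rw [h]; exact Filter.EventuallyEq.rfl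
      · right
        obtain ⟨x0, hx0⟩ := Set.nonempty_iff_ne_empty.mpr h
        have hall : ∀ n : ℤ, x0 + n ∈ s := by
          intro n
          induction n using Int.induction_on with
          | zero => simpa using hx0
          | succ k hk =>
              have := (hstep (x0 + k)).1 hk
              rwa [add_assoc] at this
          | pred k hk =>
              have h' := (hstep (x0 + -((k:ℤ) + 1))).2
              rw [show x0 + (-(k:ℤ) - 1) = x0 + -((k:ℤ) + 1) from by ring]
              apply h'
              have heq : x0 + -((k:ℤ) + 1) + 1 = x0 + -(k:ℤ) := by ring
              rwa [heq]
        have huniv : s = Set.univ := by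
          ext y
          simp only [Set.mem_univ, iff_true]
          have := hall (y - x0)
          simpa using this
        rw [huniv]; exact Filter.EventuallyEq.rfl
  · -- the function
    refine ⟨fun z : ℤ => gfun z.toNat, measurable_of_countable _, ⟨1, fun x => ?_⟩, ?_⟩
    · show |if Nat.log 2 x.toNat % 2 = 0 then (1:ℝ) else 0| ≤ 1
      split <;> norm_num
    · -- positive measure of divergence set
      have hiter : ∀ k : ℕ, (⇑(Equiv.addRight (1:ℤ)))^[k] (0:ℤ) = (k : ℤ) := by
        intro k
        induction k with
        | zero => simp
        | succ n ih =>
            rw [Function.iterate_succ_apply', ih]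
            simp [Equiv.coe_addRight]
      have h0 : (0:ℤ) ∈ {x : ℤ | ¬ ∃ L : ℝ,
          Tendsto (fun n : ℕ => (n : ℝ)⁻¹ *
            ∑ k ∈ Finset.range n, gfun ((⇑(Equiv.addRight (1:ℤ)))^[k] x).toNat)
            atTop (nhds L)} := by
        simp only [Set.mem_setOf_eq]
        intro hex
        apply gfun_avg_diverges
        have heq : (fun n : ℕ => (n : ℝ)⁻¹ *
            ∑ k ∈ Finset.range n, gfun ((⇑(Equiv.addRight (1:ℤ)))^[k] (0:ℤ)).toNat)
            = fun n : ℕ => (n : ℝ)⁻¹ * ∑ k ∈ Finset.range n, gfun k := by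
          funext n
          congr 1
          apply Finset.sum_congr rfl
          intro k _
          rw [hiter k, Int.toNat_natCast]
        rwa [heq] at hex
      calc (0:ℝ≥0∞) < 1 := by norm_num
        _ = Measure.count ({(0:ℤ)} : Set ℤ) := (Measure.count_singleton _).symm
        _ ≤ _ := measure_mono (Set.singleton_subset_iff.mpr h0)
end

section
/- Let (α, μ) be a σ-finite measure space and let f : α → ℝ be measurable with f·1_{{|f|>λ}} integrable for every λ > 0 (i.e. f ∈ R₀). Then for every ε > 0 there exists a simple function g : α → ℝ whose support has finite μ-measure such that ‖f − g‖_{L₁+L∞} < ε. -/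
open MeasureTheory Filter Finset ENNReal

/-- The `L₁ + L∞` norm of a measurable function: the infimum of
`‖h₁‖₁ + ‖h₂‖∞` over all a.e. decompositions `h = h₁ + h₂`. -/
noncomputable def l1PlusLinftyNorm {α : Type*} [MeasurableSpace α]
    (μ : Measure α) (h : α → ℝ) : ℝ≥0∞ :=
  ⨅ (p : (α → ℝ) × (α → ℝ)) (_ : h =ᵐ[μ] p.1 + p.2),
    eLpNorm p.1 1 μ + eLpNorm p.2 ⊤ μ

/-- `R₀` is the closure of simple functions with finite-measure support in the
`L₁ + L∞` norm: every `f ∈ R₀` is approximated by such simple functions. -/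
theorem R0_approx_by_simpleFunc {α : Type*} [MeasurableSpace α] (μ : Measure α)
    [SigmaFinite μ] (f : α → ℝ) (hf : Measurable f)
    (hR0 : ∀ l : ℝ, 0 < l → Integrable ({x | l < |f x|}.indicator f) μ) :
    ∀ ε : ℝ, 0 < ε → ∃ g : SimpleFunc α ℝ, μ (Function.support g) < ⊤ ∧
      l1PlusLinftyNorm μ (fun x => f x - g x) < ENNReal.ofReal ε := by
  intro ε hε
  set l : ℝ := ε / 4 with hl
  have hlpos : 0 < l := by positivity
  set f₁ : α → ℝ := ({x | l < |f x|}).indicator f with hf₁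
  have hint : Integrable f₁ μ := hR0 l hlpos
  obtain ⟨g, hg, hgmem⟩ := (memLp_one_iff_integrable.mpr hint).exists_simpleFunc_eLpNorm_sub_lt
    (by simp) (ε := ENNReal.ofReal (ε / 2)) (by simp [hε])
  refine ⟨g, g.measure_support_lt_top_of_integrable
      (memLp_one_iff_integrable.mp hgmem), ?_⟩
  set f₂ : α → ℝ := fun x => f x - f₁ x with hf₂def
  have hdecomp : (fun x => f x - g x) =ᵐ[μ] (f₁ - ⇑g) + f₂ := by
    refine Filter.EventuallyEq.of_eq (funext fun x => ?_)
    simp [hf₂def]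
  have hbound : eLpNorm f₂ ⊤ μ ≤ ENNReal.ofReal l := by
    apply eLpNormEssSup_le_of_ae_bound (C := l)
    refine Filter.Eventually.of_forall fun x => ?_
    by_cases h : l < |f x|
    · simp [hf₂def, hf₁, Set.indicator_of_mem, h]
      exact hlpos.le
    · simp [hf₂def, hf₁, Set.indicator_of_notMem, h]
      push_neg at h
      simpa using h
  calc l1PlusLinftyNorm μ (fun x => f x - g x)
      ≤ eLpNorm (f₁ - ⇑g) 1 μ + eLpNorm f₂ ⊤ μ :=
        iInf₂_le (f₁ - ⇑g, f₂) hdecomp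
    _ < ENNReal.ofReal (ε / 2) + ENNReal.ofReal l :=
        ENNReal.add_lt_add_of_lt_of_le (hbound.trans_lt ENNReal.ofReal_lt_top).ne hg hbound
    _ < ENNReal.ofReal ε := by
        rw [← ENNReal.ofReal_add (by positivity) hlpos.le]
        exact ENNReal.ofReal_lt_ofReal_iff hε |>.mpr (by rw [hl]; linarith)
end
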